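/- arXiv:1212.6742 — 3 statements merged into one kernel-verified Lean document; each statement's English description precedes it below -/
import Mathlib

section
/- Let p be a piece-wise order reversing pair composed of N1 1-blocks, N2 2-blocks, N4 4-blocks and N5 5-blocks (and no other blocks). Then Arf(p) = 2^{N1 + 2N2 + 4N4 + 5N5 + 1} + (−1)^{N4 + N5} 2^{N1 + N2 + 2N4 + 3N5}. -/
/-- A "pair" on a finite alphabet `A`: two bijections (rows) from `A`
to positions `Fin (card A)` (position `i` represents the value `i+1`). -/
structure RPair (A : Type*) [Fintype A] where
  p : Fin 2 → A ≃ Fin (Fintype.card A)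

variable {A : Type*} [Fintype A]

/-- The Rauzy move of type `ε`, as a relation: `Q = ε • P`. Row `ε` is fixed;
in row `1-ε` the last entry is cycled to just after the letter `z` occupying the
last position of row `ε` (0-indexed positions). -/
def Rmove (ε : Fin 2) (P Q : RPair A) : Prop :=
  Q.p ε = P.p ε ∧
  ∀ z : A, ((P.p ε) z).val = Fintype.card A - 1 →
    ∀ b : A, ((Q.p (1 - ε)) b).val =
      if ((P.p (1 - ε)) b).val ≤ ((P.p (1 - ε)) z).val then ((P.p (1 - ε)) b).val
      else if ((P.p (1 - ε)) b).val < Fintype.card A - 1 then ((P.p (1 - ε)) b).val + 1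
      else ((P.p (1 - ε)) z).val + 1

/-- A pair is irreducible if its two rows never occupy the first `k` positions
with the same set of letters, for `0 < k < card A`. -/
def IrreduciblePair (P : RPair A) : Prop :=
  ∀ k : ℕ, 0 < k → k < Fintype.card A →
    {a : A | ((P.p 0) a).val < k} ≠ {a : A | ((P.p 1) a).val < k}

/-- A pair is standard if the first letter of each row is the last letter of the other. -/
def StandardPair (P : RPair A) : Prop :=
  (∀ a : A, ((P.p 0) a).val = 0 → ((P.p 1) a).val = Fintype.card A - 1) ∧
  (∀ z : A, ((P.p 1) z).val = 0 → ((P.p 0) z).val = Fintype.card A - 1)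

/-- `Q` is reachable from `P` by finitely many Rauzy moves. -/
def InRauzyClass (P Q : RPair A) : Prop :=
  Relation.ReflTransGen (fun X Y : RPair A => ∃ ε, Rmove ε X Y) P Q

/-- `L_p(a,b) = 1` iff the two rows order `a` and `b` oppositely. -/
def Lcoef {A : Type*} [Fintype A] (P : RPair A) (a b : A) : ZMod 2 :=
  if ((P.p 0) a < (P.p 0) b ∧ (P.p 1) b < (P.p 1) a) ∨
     ((P.p 0) b < (P.p 0) a ∧ (P.p 1) a < (P.p 1) b) then 1 else 0

/-- The canonical quadratic form
`Q_p(v) = Σ_a v_a² + Σ_{{a,b}} L_p(a,b) v_a v_b (mod 2)`,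
where each unordered pair `{a,b}` is summed once (ordered by row 0). -/
def QF {A : Type*} [Fintype A] (P : RPair A) (v : A → ZMod 2) : ZMod 2 :=
  (∑ a : A, v a * v a) +
    ∑ a : A, ∑ b : A, if (P.p 0) a < (P.p 0) b then Lcoef P a b * v a * v b else 0

/-- `Arf(p)`: the number of vectors `v ∈ Z₂^A` with `Q_p(v) = 1`. -/
def Arf {A : Type*} [Fintype A] [DecidableEq A] (P : RPair A) : ℕ :=
  (Finset.univ.filter (fun v : A → ZMod 2 => QF P v = 1)).card



open Finset

/-! ### Auxiliary combinatorial lemmas -/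

lemma arfAux_zmod2 (x : ZMod 2) : x = 0 ∨ x = 1 := by revert x; decide

lemma arfAux_mul_self (x : ZMod 2) : x * x = x := by revert x; decide

lemma arfAux_pow_mod (m : ℕ) : ((-1:ℤ))^(m % 2) = (-1)^m := by
  rcases Nat.even_or_odd m with h | h
  · rw [Nat.even_iff.mp h, h.neg_one_pow, pow_zero]
  · rw [Nat.odd_iff.mp h, h.neg_one_pow, pow_one]

lemma arfAux_sum_lt_pairs (T : Finset ℕ) :
    (∑ i ∈ T, ∑ j ∈ T, if i < j then 1 else 0) = T.card.choose 2 := by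
  induction T using Finset.induction_on_max with
  | empty => simp
  | insert a s ha ih =>
    have ha' : a ∉ s := fun h => lt_irrefl a (ha a h)
    rw [Finset.sum_insert ha']
    have h1 : (∑ j ∈ insert a s, if a < j then 1 else 0) = 0 := by
      apply Finset.sum_eq_zero
      intro j hj
      rcases Finset.mem_insert.1 hj with rfl | hj
      · simp
      · simp [Nat.not_lt.2 (le_of_lt (ha j hj))]
    have h2 : ∀ i ∈ s, (∑ j ∈ insert a s, if i < j then 1 else 0)
        = (1 + ∑ j ∈ s, if i < j then 1 else 0) := by
      intro i hi
      rw [Finset.sum_insert ha', if_pos (ha i hi)]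
    rw [h1, Finset.sum_congr rfl h2, Finset.sum_add_distrib, Finset.sum_const,
      Finset.card_insert_of_notMem ha', ih]
    simp [Nat.choose]

lemma arfAux_sum_powerset_union (f : Finset ℕ → ℤ) (s : Finset ℕ) (t : Finset ℕ) :
    Disjoint s t →
    (∑ u ∈ (s ∪ t).powerset, f u) = ∑ a ∈ s.powerset, ∑ b ∈ t.powerset, f (a ∪ b) := by
  classical
  induction t using Finset.induction_on generalizing f with
  | empty => simp
  | @insert x u hx ih =>
    intro hdisj
    have hxs : x ∉ s := by
      intro hmem
      exact absurd (hdisj.forall_ne_finset hmem (Finset.mem_insert_self x u)) (fun h => h rfl)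
    have hxsu : x ∉ s ∪ u := by simp [hxs, hx]
    have hdisj' : Disjoint s u :=
      hdisj.mono_right (Finset.subset_insert x u)
    rw [Finset.union_insert, Finset.sum_powerset_insert hxsu, ih f hdisj',
      ih (fun S => f (insert x S)) hdisj']
    have hrhs : ∀ a ∈ s.powerset, (∑ b ∈ (insert x u).powerset, f (a ∪ b))
        = (∑ b ∈ u.powerset, f (a ∪ b)) + ∑ b ∈ u.powerset, f (insert x (a ∪ b)) := by
      intro a _
      rw [Finset.sum_powerset_insert hx]
      congr 1
      exact Finset.sum_congr rfl fun b _ => by rw [Finset.union_insert]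
    rw [Finset.sum_congr rfl hrhs, Finset.sum_add_distrib]

lemma arfAux_blockval {s : Finset ℕ} {j : ℕ} (h : s.card = j)
    (hj : j = 1 ∨ j = 2 ∨ j = 4 ∨ j = 5) :
    (∑ S ∈ s.powerset, (-1:ℤ)^(S.card.choose 2)) =
      if j = 4 ∨ j = 5 then -(2 ^ (j - 2)) else 2 := by
  rw [Finset.sum_powerset_apply_card (f := fun m => (-1:ℤ)^(m.choose 2)), h]
  rcases hj with rfl | rfl | rfl | rfl <;>
    simp [Finset.sum_range_succ, Nat.choose]

lemma arfAux_prod_partition (ℓ : ℕ) (d : ℕ → ℕ) (N1 N2 N4 N5 : ℕ)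
    (hsizes : ∀ i < ℓ, d i = 1 ∨ d i = 2 ∨ d i = 4 ∨ d i = 5)
    (hN1 : ((Finset.range ℓ).filter (fun i => d i = 1)).card = N1)
    (hN2 : ((Finset.range ℓ).filter (fun i => d i = 2)).card = N2)
    (hN4 : ((Finset.range ℓ).filter (fun i => d i = 4)).card = N4)
    (hN5 : ((Finset.range ℓ).filter (fun i => d i = 5)).card = N5)
    {M : Type*} [CommMonoid M] (g : ℕ → M) :
    ∏ r ∈ Finset.range ℓ, g (d r) = g 1 ^ N1 * g 2 ^ N2 * g 4 ^ N4 * g 5 ^ N5 := by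
  classical
  have hsplit : Finset.range ℓ =
      ((Finset.range ℓ).filter (fun i => d i = 1)) ∪
      (((Finset.range ℓ).filter (fun i => d i = 2)) ∪
      (((Finset.range ℓ).filter (fun i => d i = 4)) ∪
       ((Finset.range ℓ).filter (fun i => d i = 5)))) := by
    ext m
    simp only [Finset.mem_union, Finset.mem_filter, Finset.mem_range]
    constructor
    · intro hm
      rcases hsizes m hm with h | h | h | h <;> tauto
    · tauto
  have hd : ∀ (a b : ℕ), a ≠ b → Disjoint ((Finset.range ℓ).filter (fun i => d i = a))
      ((Finset.range ℓ).filter (fun i => d i = b)) := by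
    intro a b hab
    rw [Finset.disjoint_left]
    intro x hx hx'
    simp only [Finset.mem_filter] at hx hx'
    exact hab (hx.2 ▸ hx'.2 ▸ rfl)
  have hconst : ∀ (a : ℕ), ∏ r ∈ (Finset.range ℓ).filter (fun i => d i = a), g (d r)
      = g a ^ ((Finset.range ℓ).filter (fun i => d i = a)).card := by
    intro a
    rw [Finset.prod_congr rfl (fun x hx => by rw [(Finset.mem_filter.1 hx).2]),
      Finset.prod_const]
  rw [hsplit, Finset.prod_union, Finset.prod_union, Finset.prod_union,
    hconst, hconst, hconst, hconst, hN1, hN2, hN4, hN5, mul_assoc, mul_assoc]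
  · exact hd 4 5 (by norm_num)
  · rw [Finset.disjoint_union_right]
    exact ⟨hd 2 4 (by norm_num), hd 2 5 (by norm_num)⟩
  · rw [Finset.disjoint_union_right, Finset.disjoint_union_right]
    exact ⟨hd 1 2 (by norm_num), hd 1 4 (by norm_num), hd 1 5 (by norm_num)⟩

lemma arfAux_sum_partition (ℓ : ℕ) (d : ℕ → ℕ) (N1 N2 N4 N5 : ℕ)
    (hsizes : ∀ i < ℓ, d i = 1 ∨ d i = 2 ∨ d i = 4 ∨ d i = 5)
    (hN1 : ((Finset.range ℓ).filter (fun i => d i = 1)).card = N1)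
    (hN2 : ((Finset.range ℓ).filter (fun i => d i = 2)).card = N2)
    (hN4 : ((Finset.range ℓ).filter (fun i => d i = 4)).card = N4)
    (hN5 : ((Finset.range ℓ).filter (fun i => d i = 5)).card = N5) :
    ∑ r ∈ Finset.range ℓ, d r = N1 + 2 * N2 + 4 * N4 + 5 * N5 := by
  have := arfAux_prod_partition ℓ d N1 N2 N4 N5 hsizes hN1 hN2 hN4 hN5
    (M := Multiplicative ℕ) (fun j => Multiplicative.ofAdd j)
  have h2 := congrArg Multiplicative.toAdd this
  simpa [toAdd_prod, toAdd_pow, Nat.smul_one_eq_cast, mul_comm] using h2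

lemma arfAux_key4 (a e : ℕ) :
    (-1:ℤ)^(a + e) + (-1)^((a+1) + (e+a)) + ((-1)^((a+1) + (e+a)) + (-1)^((a+2) + ((e+a) + (a+1))))
    = -2 * (-1)^e := by
  have hx : (-1:ℤ)^a * (-1)^a = 1 := by
    rw [← pow_add]; exact Even.neg_one_pow ⟨a, rfl⟩
  simp only [pow_add, pow_one, neg_one_sq]
  linear_combination (-((-1:ℤ)^e * ((-1)^a + 2))) * hx

/-! ### The pair-counting quantity -/

def arfNP (pi : ℕ → ℕ) (S : Finset ℕ) : ℕ :=
  ∑ i ∈ S, ∑ j ∈ S, if i < j ∧ pi j < pi i then 1 else 0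

lemma arfNP_insert_top (pi : ℕ → ℕ) (S : Finset ℕ) (x : ℕ) (hx : x ∉ S)
    (htop : ∀ i ∈ S, i < x ∧ pi x < pi i) :
    arfNP pi (insert x S) = arfNP pi S + S.card := by
  unfold arfNP
  rw [Finset.sum_insert hx]
  have h1 : (∑ j ∈ insert x S, if x < j ∧ pi j < pi x then 1 else 0) = 0 := by
    apply Finset.sum_eq_zero
    intro j hj
    rcases Finset.mem_insert.1 hj with rfl | hj
    · simp
    · have := (htop j hj).1
      rw [if_neg]
      omega
  have h2 : ∀ i ∈ S, (∑ j ∈ insert x S, if i < j ∧ pi j < pi i then 1 else 0)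
      = (1 + ∑ j ∈ S, if i < j ∧ pi j < pi i then 1 else 0) := by
    intro i hi
    rw [Finset.sum_insert hx, if_pos (htop i hi)]
  rw [h1, Finset.sum_congr rfl h2, Finset.sum_add_distrib, Finset.sum_const]
  simp [add_comm]

lemma arfNP_insert_bot (pi : ℕ → ℕ) (S : Finset ℕ) (x : ℕ) (hx : x ∉ S)
    (hbot : ∀ j ∈ S, x < j ∧ pi j < pi x) :
    arfNP pi (insert x S) = arfNP pi S + S.card := by
  unfold arfNP
  rw [Finset.sum_insert hx]
  have h1 : (∑ j ∈ insert x S, if x < j ∧ pi j < pi x then 1 else 0) = S.card := by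
    rw [Finset.sum_insert hx, if_neg (by omega)]
    rw [Finset.sum_congr rfl (fun j hj => if_pos (hbot j hj)), Finset.sum_const]
    simp
  have h2 : ∀ i ∈ S, (∑ j ∈ insert x S, if i < j ∧ pi j < pi i then 1 else 0)
      = (∑ j ∈ S, if i < j ∧ pi j < pi i then 1 else 0) := by
    intro i hi
    rw [Finset.sum_insert hx, if_neg (by have := (hbot i hi).1; omega), zero_add]
  rw [h1, Finset.sum_congr rfl h2]
  omega

/-! ### The structural context -/

structure ArfCtx (n ℓ : ℕ) (k pi : ℕ → ℕ) : Prop where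
  hn : 2 ≤ n
  hk0 : k 0 = 1
  hkl : k ℓ = n - 1
  hmono : ∀ i < ℓ, k i < k (i + 1)
  hpi0 : pi 0 = n - 1
  hpin : pi (n - 1) = 0
  hblock : ∀ t < ℓ, ∀ m, k t ≤ m → m < k (t + 1) → m + pi m + 1 = k t + k (t + 1)

namespace ArfCtx

variable {n ℓ : ℕ} {k pi : ℕ → ℕ}

lemma kmono' (C : ArfCtx n ℓ k pi) : ∀ b ≤ ℓ, ∀ a ≤ b, k a ≤ k b := by
  intro b
  induction b with
  | zero => intro _ a ha; have : a = 0 := Nat.le_zero.mp ha; simp [this]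
  | succ b ih =>
    intro hb a ha
    rcases Nat.le_succ_iff.mp ha with h | rfl
    · exact le_trans (ih (by omega) a h) (le_of_lt (C.hmono b (by omega)))
    · exact le_refl _

lemma exists_block' (C : ArfCtx n ℓ k pi) :
    ∀ m, 1 ≤ m → m < n - 1 → ∃ t, t < ℓ ∧ k t ≤ m ∧ m < k (t + 1) := by
  intro m h1 h2
  have hl : 0 < ℓ := by
    rcases Nat.eq_zero_or_pos ℓ with rfl | h
    · have := C.hkl; have := C.hk0; omega
    · exact h
  have hspec : k (Nat.findGreatest (fun t => k t ≤ m) ℓ) ≤ m :=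
    Nat.findGreatest_spec (P := fun t => k t ≤ m) (Nat.zero_le ℓ)
      (by show k 0 ≤ m; rw [C.hk0]; exact h1)
  have htle : Nat.findGreatest (fun t => k t ≤ m) ℓ ≤ ℓ := Nat.findGreatest_le ℓ
  have htlt : Nat.findGreatest (fun t => k t ≤ m) ℓ < ℓ := by
    rcases Nat.lt_or_ge (Nat.findGreatest (fun t => k t ≤ m) ℓ) ℓ with h | h
    · exact h
    · exfalso
      have heq : Nat.findGreatest (fun t => k t ≤ m) ℓ = ℓ := by omega
      rw [heq, C.hkl] at hspec; omega
  refine ⟨Nat.findGreatest (fun t => k t ≤ m) ℓ, htlt, hspec, ?_⟩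
  by_contra hcon
  have hle : k (Nat.findGreatest (fun t => k t ≤ m) ℓ + 1) ≤ m := by omega
  exact absurd hle (Nat.findGreatest_is_greatest (P := fun t => k t ≤ m) (n := ℓ)
    (k := Nat.findGreatest (fun t => k t ≤ m) ℓ + 1) (by omega) (by omega))

lemma block_range' (C : ArfCtx n ℓ k pi) {t m : ℕ} (ht : t < ℓ) (h1 : k t ≤ m)
    (h2 : m < k (t + 1)) : k t ≤ pi m ∧ pi m < k (t + 1) := by
  have := C.hblock t ht m h1 h2
  omega

lemma block_uniq' (C : ArfCtx n ℓ k pi) {t t' m : ℕ} (ht : t < ℓ) (ht' : t' < ℓ)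
    (h1 : k t ≤ m) (h2 : m < k (t + 1)) (h1' : k t' ≤ m) (h2' : m < k (t' + 1)) :
    t = t' := by
  by_contra hne
  rcases Nat.lt_or_ge t t' with h | h
  · have : k (t + 1) ≤ k t' := C.kmono' t' (by omega) (t + 1) (by omega)
    omega
  · have htt : t' < t := by omega
    have : k (t' + 1) ≤ k t := C.kmono' t (by omega) (t' + 1) (by omega)
    omega

lemma pi_mid' (C : ArfCtx n ℓ k pi) {m : ℕ} (h1 : 1 ≤ m) (h2 : m < n - 1) :
    1 ≤ pi m ∧ pi m < n - 1 := by
  obtain ⟨t, ht, hm1, hm2⟩ := C.exists_block' m h1 h2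
  have hr := C.block_range' ht hm1 hm2
  have l1 : k 0 ≤ k t := C.kmono' t (by omega) 0 (by omega)
  have l2 : k (t + 1) ≤ k ℓ := C.kmono' ℓ (le_refl _) (t + 1) (by omega)
  rw [C.hk0] at l1
  rw [C.hkl] at l2
  omega

lemma pointwise' (C : ArfCtx n ℓ k pi) {i j : ℕ} (hi1 : 1 ≤ i) (hi2 : i < n - 1)
    (hj1 : 1 ≤ j) (hj2 : j < n - 1) :
    (if i < j ∧ pi j < pi i then 1 else 0)
      = ∑ t ∈ Finset.range ℓ,
          if (k t ≤ i ∧ i < k (t + 1)) ∧ (k t ≤ j ∧ j < k (t + 1)) ∧ i < j then 1 else 0 := by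
  by_cases hc : i < j ∧ pi j < pi i
  · rw [if_pos hc]
    obtain ⟨t, ht, hi1', hi2'⟩ := C.exists_block' i hi1 hi2
    obtain ⟨t', ht', hj1', hj2'⟩ := C.exists_block' j hj1 hj2
    have hsame : t = t' := by
      by_contra hne
      rcases Nat.lt_or_ge t t' with h | h
      · have hri := C.block_range' ht hi1' hi2'
        have hrj := C.block_range' ht' hj1' hj2'
        have : k (t + 1) ≤ k t' := C.kmono' t' (by omega) (t + 1) (by omega)
        omega
      · have hne' : t' < t := by omega
        have : k (t' + 1) ≤ k t := C.kmono' t (by omega) (t' + 1) (by omega)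
        omega
    subst hsame
    rw [Finset.sum_eq_single_of_mem t (Finset.mem_range.2 ht)]
    · rw [if_pos ⟨⟨hi1', hi2'⟩, ⟨hj1', hj2'⟩, hc.1⟩]
    · intro t' ht' hne
      rw [if_neg]
      intro ⟨⟨a1, a2⟩, _, _⟩
      exact hne (C.block_uniq' (Finset.mem_range.1 ht') ht a1 a2 hi1' hi2')
  · rw [if_neg hc]
    symm
    apply Finset.sum_eq_zero
    intro t ht
    rw [if_neg]
    intro ⟨⟨a1, a2⟩, ⟨b1, b2⟩, hij⟩
    have e1 := C.hblock t (Finset.mem_range.1 ht) i a1 a2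
    have e2 := C.hblock t (Finset.mem_range.1 ht) j b1 b2
    exact hc ⟨hij, by omega⟩

lemma np_blocks' (C : ArfCtx n ℓ k pi) (S : Finset ℕ) (hS : ∀ m ∈ S, 1 ≤ m ∧ m < n - 1) :
    arfNP pi S = ∑ t ∈ Finset.range ℓ,
      ((S ∩ Finset.Ico (k t) (k (t + 1))).card.choose 2) := by
  unfold arfNP
  rw [Finset.sum_congr rfl (fun i hi => Finset.sum_congr rfl (fun j hj =>
      pointwise' C (hS i hi).1 (hS i hi).2 (hS j hj).1 (hS j hj).2))]
  rw [Finset.sum_congr rfl (fun i _ => Finset.sum_comm), Finset.sum_comm]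
  refine Finset.sum_congr rfl fun t _ => ?_
  have hfilter : S.filter (fun m => k t ≤ m ∧ m < k (t + 1))
      = S ∩ Finset.Ico (k t) (k (t + 1)) := by
    ext m
    simp [Finset.mem_Ico, Finset.mem_filter, Finset.mem_inter]
  rw [← hfilter]
  rw [← arfAux_sum_lt_pairs]
  rw [Finset.sum_filter (p := fun m => k t ≤ m ∧ m < k (t + 1))
      (f := fun i => ∑ j ∈ S.filter (fun m => k t ≤ m ∧ m < k (t + 1)),
        if i < j then 1 else 0)]
  refine Finset.sum_congr rfl fun i _ => ?_
  by_cases hPi : k t ≤ i ∧ i < k (t + 1)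
  · rw [if_pos hPi, Finset.sum_filter (p := fun m => k t ≤ m ∧ m < k (t + 1))
      (f := fun j => if i < j then (1:ℕ) else 0)]
    refine Finset.sum_congr rfl fun j _ => ?_
    by_cases hPj : k t ≤ j ∧ j < k (t + 1)
    · rw [if_pos hPj]
      by_cases hij : i < j
      · rw [if_pos ⟨hPi, hPj, hij⟩, if_pos hij]
      · rw [if_neg (by tauto), if_neg hij]
    · rw [if_neg hPj, if_neg (by tauto)]
  · rw [if_neg hPi]
    exact Finset.sum_eq_zero fun j _ => if_neg (by tauto)

lemma core (C : ArfCtx n ℓ k pi) (N1 N2 N4 N5 : ℕ)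
    (hsizes : ∀ i < ℓ, k (i + 1) - k i = 1 ∨ k (i + 1) - k i = 2 ∨
                       k (i + 1) - k i = 4 ∨ k (i + 1) - k i = 5)
    (hN1 : ((Finset.range ℓ).filter (fun i => k (i + 1) - k i = 1)).card = N1)
    (hN2 : ((Finset.range ℓ).filter (fun i => k (i + 1) - k i = 2)).card = N2)
    (hN4 : ((Finset.range ℓ).filter (fun i => k (i + 1) - k i = 4)).card = N4)
    (hN5 : ((Finset.range ℓ).filter (fun i => k (i + 1) - k i = 5)).card = N5) :
    (∑ S ∈ (Finset.range n).powerset, (-1:ℤ)^(S.card + arfNP pi S))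
      = -2 * ((-1:ℤ)^(N4 + N5) * 2^(N1 + N2 + 2*N4 + 3*N5)) := by
  have hn := C.hn
  have hsplit : Finset.range n = insert 0 (insert (n-1) (Finset.Ico 1 (n-1))) := by
    ext m
    simp only [Finset.mem_range, Finset.mem_insert, Finset.mem_Ico]
    omega
  have h1 : (n-1) ∉ Finset.Ico 1 (n-1) := by simp
  have h0 : (0:ℕ) ∉ insert (n-1) (Finset.Ico 1 (n-1)) := by
    simp only [Finset.mem_insert, Finset.mem_Ico]
    omega
  rw [hsplit, Finset.sum_powerset_insert h0]
  simp only [Finset.sum_powerset_insert h1]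
  rw [← Finset.sum_add_distrib, ← Finset.sum_add_distrib, ← Finset.sum_add_distrib]
  have hcomb : ∀ S ∈ (Finset.Ico 1 (n-1)).powerset,
      ((-1:ℤ)^(S.card + arfNP pi S) + (-1)^((insert (n-1) S).card + arfNP pi (insert (n-1) S)))
      + ((-1)^((insert 0 S).card + arfNP pi (insert 0 S))
         + (-1)^((insert 0 (insert (n-1) S)).card + arfNP pi (insert 0 (insert (n-1) S))))
      = -2 * (-1)^(arfNP pi S) := by
    intro S hSm
    rw [Finset.mem_powerset] at hSm
    have hS : ∀ m ∈ S, 1 ≤ m ∧ m < n - 1 := by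
      intro m hm
      have := hSm hm
      rw [Finset.mem_Ico] at this
      exact this
    have hn1S : (n-1) ∉ S := fun h => by have := hS _ h; omega
    have h0S : (0:ℕ) ∉ S := fun h => by have := hS _ h; omega
    have h0S' : (0:ℕ) ∉ insert (n-1) S := by
      simp only [Finset.mem_insert]
      push_neg
      exact ⟨by omega, h0S⟩
    have np1 : arfNP pi (insert (n-1) S) = arfNP pi S + S.card := by
      refine arfNP_insert_top pi S (n-1) hn1S fun i hi => ?_
      have hmid := C.pi_mid' (hS i hi).1 (hS i hi).2
      refine ⟨(hS i hi).2, ?_⟩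
      rw [C.hpin]
      omega
    have np2 : arfNP pi (insert 0 S) = arfNP pi S + S.card := by
      refine arfNP_insert_bot pi S 0 h0S fun j hj => ?_
      have hmid := C.pi_mid' (hS j hj).1 (hS j hj).2
      refine ⟨(hS j hj).1, ?_⟩
      rw [C.hpi0]
      omega
    have np3 : arfNP pi (insert 0 (insert (n-1) S))
        = arfNP pi (insert (n-1) S) + (insert (n-1) S).card := by
      refine arfNP_insert_bot pi _ 0 h0S' fun j hj => ?_
      rcases Finset.mem_insert.1 hj with rfl | hj
      · rw [C.hpi0, C.hpin]
        omega
      · have hmid := C.pi_mid' (hS j hj).1 (hS j hj).2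
        refine ⟨(hS j hj).1, ?_⟩
        rw [C.hpi0]
        omega
    rw [np3, np1, np2, Finset.card_insert_of_notMem h0S',
      Finset.card_insert_of_notMem hn1S, Finset.card_insert_of_notMem h0S]
    exact arfAux_key4 S.card (arfNP pi S)
  rw [Finset.sum_congr rfl hcomb, ← Finset.mul_sum]
  congr 1
  have hIco : Finset.Ico 1 (n-1) = Finset.Ico (k 0) (k ℓ) := by rw [C.hk0, C.hkl]
  have hrw : ∀ S ∈ (Finset.Ico 1 (n-1)).powerset,
      (-1:ℤ)^(arfNP pi S) = ∏ t ∈ Finset.range ℓ,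
        (-1:ℤ)^((S ∩ Finset.Ico (k t) (k (t + 1))).card.choose 2) := by
    intro S hSm
    rw [Finset.mem_powerset] at hSm
    rw [C.np_blocks' S (fun m hm => by have := hSm hm; rw [Finset.mem_Ico] at this; exact this)]
    rw [Finset.prod_pow_eq_pow_sum]
  rw [Finset.sum_congr rfl hrw, hIco]
  have hprod : ∀ t, t ≤ ℓ →
      (∑ S ∈ (Finset.Ico (k 0) (k t)).powerset,
        ∏ r ∈ Finset.range t, (-1:ℤ)^((S ∩ Finset.Ico (k r) (k (r+1))).card.choose 2))
      = ∏ r ∈ Finset.range t,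
          (∑ T ∈ (Finset.Ico (k r) (k (r+1))).powerset, (-1:ℤ)^(T.card.choose 2)) := by
    intro t
    induction t with
    | zero => simp
    | succ t ih =>
      intro ht
      have hkk1 : k 0 ≤ k t := C.kmono' t (by omega) 0 (by omega)
      have hkk2 : k t ≤ k (t+1) := le_of_lt (C.hmono t (by omega))
      rw [← Finset.Ico_union_Ico_eq_Ico hkk1 hkk2,
        arfAux_sum_powerset_union _ _ _ (Finset.Ico_disjoint_Ico_consecutive _ _ _)]
      have hinner : ∀ a ∈ (Finset.Ico (k 0) (k t)).powerset,
          ∀ b ∈ (Finset.Ico (k t) (k (t+1))).powerset,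
          (∏ r ∈ Finset.range (t+1),
            (-1:ℤ)^(((a ∪ b) ∩ Finset.Ico (k r) (k (r+1))).card.choose 2))
          = (∏ r ∈ Finset.range t,
              (-1:ℤ)^((a ∩ Finset.Ico (k r) (k (r+1))).card.choose 2))
            * (-1:ℤ)^(b.card.choose 2) := by
        intro a ha b hb
        rw [Finset.mem_powerset] at ha hb
        rw [Finset.prod_range_succ]
        congr 1
        · refine Finset.prod_congr rfl fun r hr => ?_
          have hr' := Finset.mem_range.1 hr
          have hb' : b ∩ Finset.Ico (k r) (k (r+1)) = ∅ := by
            have hle : k (r+1) ≤ k t := C.kmono' t (by omega) (r+1) (by omega)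
            rw [Finset.eq_empty_iff_forall_notMem]
            intro m hm
            rw [Finset.mem_inter, Finset.mem_Ico] at hm
            have := hb hm.1
            rw [Finset.mem_Ico] at this
            omega
          rw [Finset.union_inter_distrib_right, hb', Finset.union_empty]
        · have h1' : a ∩ Finset.Ico (k t) (k (t+1)) = ∅ := by
            rw [Finset.eq_empty_iff_forall_notMem]
            intro m hm
            rw [Finset.mem_inter, Finset.mem_Ico] at hm
            have := ha hm.1
            rw [Finset.mem_Ico] at this
            omega
          rw [Finset.union_inter_distrib_right, h1',
            Finset.inter_eq_left.2 hb, Finset.empty_union]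
      rw [Finset.sum_congr rfl (fun a ha => Finset.sum_congr rfl (fun b hb => hinner a ha b hb))]
      rw [← Finset.sum_mul_sum, ih (by omega), ← Finset.prod_range_succ]
  rw [hprod ℓ (le_refl ℓ)]
  have hBval : ∀ r ∈ Finset.range ℓ,
      (∑ T ∈ (Finset.Ico (k r) (k (r+1))).powerset, (-1:ℤ)^(T.card.choose 2))
      = (fun j => if j = 4 ∨ j = 5 then -((2:ℤ) ^ (j - 2)) else 2) (k (r+1) - k r) := by
    intro r hr
    have hr' := Finset.mem_range.1 hr
    exact arfAux_blockval (Nat.card_Ico _ _) (hsizes r hr')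
  rw [Finset.prod_congr rfl hBval]
  rw [arfAux_prod_partition ℓ (fun i => k (i+1) - k i) N1 N2 N4 N5 hsizes hN1 hN2 hN4 hN5
    (fun j => if j = 4 ∨ j = 5 then -((2:ℤ) ^ (j - 2)) else 2)]
  norm_num
  rw [show ((-4:ℤ)) = -1 * 2^2 by norm_num, show ((-8:ℤ)) = -1 * 2^3 by norm_num,
    mul_pow, mul_pow, ← pow_mul, ← pow_mul, pow_add, pow_add, pow_add, pow_add]
  ring

end ArfCtx


/-- For a piece-wise order reversing pair composed of `N1` 1-blocks, `N2`
2-blocks, `N4` 4-blocks and `N5` 5-blocks (and no other blocks),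
`Arf(p) = 2^(N1+2N2+4N4+5N5+1) + (-1)^(N4+N5) 2^(N1+N2+2N4+3N5)`. -/
theorem arf_block_count
    {A : Type*} [Fintype A] [DecidableEq A] (P : RPair A)
    (hStd : StandardPair P)
    (N1 N2 N4 N5 : ℕ) (ℓ : ℕ) (k : ℕ → ℕ)
    (hk0 : k 0 = 1) (hkl : k ℓ = Fintype.card A - 1)
    (hmono : ∀ i < ℓ, k i < k (i + 1))
    (hblocks : ∀ i < ℓ,
      (∀ b : A, (k i ≤ ((P.p 0) b).val ∧ ((P.p 0) b).val < k (i + 1)) ↔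
                (k i ≤ ((P.p 1) b).val ∧ ((P.p 1) b).val < k (i + 1))) ∧
      (∀ b : A, k i ≤ ((P.p 0) b).val → ((P.p 0) b).val < k (i + 1) →
                ((P.p 0) b).val + ((P.p 1) b).val = k i + k (i + 1) - 1))
    (hsizes : ∀ i < ℓ, k (i + 1) - k i = 1 ∨ k (i + 1) - k i = 2 ∨
                       k (i + 1) - k i = 4 ∨ k (i + 1) - k i = 5)
    (hN1 : ((Finset.range ℓ).filter (fun i => k (i + 1) - k i = 1)).card = N1)
    (hN2 : ((Finset.range ℓ).filter (fun i => k (i + 1) - k i = 2)).card = N2)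
    (hN4 : ((Finset.range ℓ).filter (fun i => k (i + 1) - k i = 4)).card = N4)
    (hN5 : ((Finset.range ℓ).filter (fun i => k (i + 1) - k i = 5)).card = N5) :
    (Arf P : ℤ) = 2 ^ (N1 + 2 * N2 + 4 * N4 + 5 * N5 + 1) +
      (-1 : ℤ) ^ (N4 + N5) * 2 ^ (N1 + N2 + 2 * N4 + 3 * N5) := by
  classical
  set n := Fintype.card A with hn_def
  -- monotonicity of k
  have kmono : ∀ b ≤ ℓ, ∀ a ≤ b, k a ≤ k b := by
    intro b
    induction b with
    | zero => intro _ a ha; have : a = 0 := Nat.le_zero.mp ha; simp [this]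
    | succ b ih =>
      intro hb a ha
      rcases Nat.le_succ_iff.mp ha with h | rfl
      · exact le_trans (ih (by omega) a h) (le_of_lt (hmono b (by omega)))
      · exact le_refl _
  have hn2 : 2 ≤ n := by
    have h1 : k 0 ≤ k ℓ := kmono ℓ (le_refl _) 0 (Nat.zero_le _)
    rw [hk0, hkl] at h1
    rcases Nat.lt_or_ge n 2 with h | h
    · interval_cases n <;> omega
    · exact h
  -- the permutation on positions
  set pi : ℕ → ℕ := fun m =>
    if h : m < n then ((P.p 1) ((P.p 0).symm ⟨m, h⟩)).val else 0 with hpi_def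
  have hpi_eval : ∀ a : A, pi ((P.p 0) a).val = ((P.p 1) a).val := by
    intro a
    rw [hpi_def]
    simp only
    rw [dif_pos (((P.p 0) a).isLt)]
    congr 1
    rw [show (⟨((P.p 0) a).val, ((P.p 0) a).isLt⟩ : Fin n) = (P.p 0) a from rfl,
      Equiv.symm_apply_apply]
  -- context
  have C : ArfCtx n ℓ k pi := by
    refine ⟨hn2, hk0, hkl, hmono, ?_, ?_, ?_⟩
    · -- pi 0 = n - 1
      have h0 : (0:ℕ) < n := by omega
      have := hStd.1 ((P.p 0).symm ⟨0, h0⟩) (by simp)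
      rw [hpi_def]
      simp only
      rw [dif_pos h0]
      exact this
    · -- pi (n-1) = 0
      have hlt : n - 1 < n := by omega
      have h0 : (0:ℕ) < n := by omega
      set z := (P.p 1).symm ⟨0, h0⟩ with hz
      have hz1 : ((P.p 1) z).val = 0 := by rw [hz, Equiv.apply_symm_apply]
      have hz0 : ((P.p 0) z).val = n - 1 := hStd.2 z hz1
      rw [hpi_def]
      simp only
      rw [dif_pos hlt]
      have : ((P.p 0).symm ⟨n - 1, hlt⟩) = z := by
        apply_fun (P.p 0)
        rw [Equiv.apply_symm_apply]
        exact (Fin.ext hz0).symm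
      rw [this, hz1]
    · -- block formula
      intro t ht m h1 h2
      have hmn : m < n := by
        have : k (t+1) ≤ k ℓ := kmono ℓ (le_refl _) (t+1) (by omega)
        omega
      have hk1 : 1 ≤ k t := by
        have : k 0 ≤ k t := kmono t (by omega) 0 (Nat.zero_le _)
        omega
      set b := (P.p 0).symm ⟨m, hmn⟩ with hb
      have hb0 : ((P.p 0) b).val = m := by rw [hb, Equiv.apply_symm_apply]
      have := (hblocks t ht).2 b (by rw [hb0]; exact h1) (by rw [hb0]; exact h2)
      rw [hb0] at this
      have hpim : pi m = ((P.p 1) b).val := by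
        rw [hpi_def]; simp only; rw [dif_pos hmn]
      rw [hpim]
      omega
  -- membership lemma
  have hinj : Function.Injective (fun a : A => ((P.p 0) a).val) := by
    intro a b h
    exact (P.p 0).injective (Fin.val_injective h)
  have hmem : ∀ (v : A → ZMod 2) (a : A),
      ((((P.p 0) a).val ∈ (Finset.univ.filter (fun x => v x = 1)).image
        (fun x => ((P.p 0) x).val)) ↔ v a = 1) := by
    intro v a
    rw [Finset.mem_image]
    constructor
    · rintro ⟨b, hb, hba⟩
      rw [Finset.mem_filter] at hb
      have hba' : b = a := hinj hba
      exact hba' ▸ hb.2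
    · intro h
      exact ⟨a, Finset.mem_filter.2 ⟨Finset.mem_univ a, h⟩, rfl⟩
  -- translation of the character sum
  have hW : (∑ v : A → ZMod 2, (-1:ℤ)^((QF P v).val))
      = ∑ S ∈ (Finset.range n).powerset, (-1:ℤ)^(S.card + arfNP pi S) := by
    refine Finset.sum_nbij'
      (fun v => (Finset.univ.filter (fun a => v a = 1)).image (fun a => ((P.p 0) a).val))
      (fun S a => if ((P.p 0) a).val ∈ S then 1 else 0)
      ?_ ?_ ?_ ?_ ?_
    · intro v _
      rw [Finset.mem_powerset]
      intro m hm
      rw [Finset.mem_image] at hm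
      obtain ⟨a, _, rfl⟩ := hm
      exact Finset.mem_range.2 (((P.p 0) a).isLt)
    · intro S _
      exact Finset.mem_univ _
    · intro v _
      funext a
      simp only [hmem]
      rcases arfAux_zmod2 (v a) with h | h <;> simp [h]
    · intro S hSm
      rw [Finset.mem_powerset] at hSm
      ext m
      rw [Finset.mem_image]
      constructor
      · rintro ⟨b, hb, rfl⟩
        rw [Finset.mem_filter] at hb
        by_contra hc
        have hb2 := hb.2
        simp only [if_neg hc] at hb2
        exact absurd hb2 (by norm_num)
      · intro hm
        have hmn : m < n := Finset.mem_range.1 (hSm hm)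
        refine ⟨(P.p 0).symm ⟨m, hmn⟩, ?_, by rw [Equiv.apply_symm_apply]⟩
        rw [Finset.mem_filter]
        refine ⟨Finset.mem_univ _, ?_⟩
        show (if (((P.p 0) ((P.p 0).symm ⟨m, hmn⟩))).val ∈ S then (1:ZMod 2) else 0) = 1
        rw [Equiv.apply_symm_apply]
        exact if_pos hm
    · intro v _
      set S := (Finset.univ.filter (fun a => v a = 1)).image (fun a => ((P.p 0) a).val) with hSdef
      have hSsub : S ⊆ Finset.range n := by
        intro m hm
        rw [hSdef, Finset.mem_image] at hm
        obtain ⟨a, _, rfl⟩ := hm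
        exact Finset.mem_range.2 (((P.p 0) a).isLt)
      -- QF P v = cast of the combinatorial count
      have partA : (∑ a : A, v a * v a)
          = (((Finset.univ.filter (fun a => v a = 1)).card : ℕ) : ZMod 2) := by
        have h1 : ∀ a : A, v a * v a = (if v a = 1 then (1 : ZMod 2) else 0) := by
          intro a
          rcases arfAux_zmod2 (v a) with h | h <;> simp [h]
        rw [Finset.sum_congr rfl (fun a _ => h1 a), Finset.sum_boole]
      have hScard : S.card = (Finset.univ.filter (fun a => v a = 1)).card := by
        rw [hSdef]
        exact Finset.card_image_of_injective _ hinj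
      -- pointwise identity for the cross terms
      have point : ∀ a b : A,
          (if (P.p 0) a < (P.p 0) b then Lcoef P a b * v a * v b else 0)
          = (if (((P.p 0) a).val < ((P.p 0) b).val ∧ pi (((P.p 0) b).val) < pi (((P.p 0) a).val)
              ∧ ((P.p 0) a).val ∈ S ∧ ((P.p 0) b).val ∈ S) then (1:ZMod 2) else 0) := by
        intro a b
        have hiff : ((((P.p 0) a).val < ((P.p 0) b).val
            ∧ pi (((P.p 0) b).val) < pi (((P.p 0) a).val)
            ∧ ((P.p 0) a).val ∈ S ∧ ((P.p 0) b).val ∈ S))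
            ↔ (((P.p 0) a < (P.p 0) b ∧ (P.p 1) b < (P.p 1) a) ∧ (v a = 1 ∧ v b = 1)) := by
          rw [hpi_eval a, hpi_eval b, hSdef, hmem v a, hmem v b]
          rw [Fin.lt_def, Fin.lt_def]
          tauto
        simp only [hiff]
        by_cases h1 : (P.p 0) a < (P.p 0) b
        · rw [if_pos h1]
          unfold Lcoef
          by_cases h2 : (P.p 1) b < (P.p 1) a
          · rw [if_pos (Or.inl ⟨h1, h2⟩), one_mul]
            rcases arfAux_zmod2 (v a) with ha | ha <;> rcases arfAux_zmod2 (v b) with hb | hb <;>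
              simp [ha, hb, h1, h2]
          · rw [if_neg, if_neg (by tauto)]
            · ring
            · rintro (⟨_, hc⟩ | ⟨hc, _⟩)
              · exact h2 hc
              · exact absurd h1 (not_lt.2 (le_of_lt hc))
        · rw [if_neg h1, if_neg (by tauto)]
      -- cross sum as a double sum over range n
      have step1 : (∑ a : A, ∑ b : A, if (P.p 0) a < (P.p 0) b then Lcoef P a b * v a * v b else 0)
          = ∑ m ∈ Finset.range n, ∑ m' ∈ Finset.range n,
              (if (m < m' ∧ pi m' < pi m ∧ m ∈ S ∧ m' ∈ S) then (1:ZMod 2) else 0) := by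
        refine Finset.sum_bij' (fun a _ => ((P.p 0) a).val)
          (fun m hm => (P.p 0).symm ⟨m, Finset.mem_range.1 hm⟩) ?_ ?_ ?_ ?_ ?_
        · intro a _; exact Finset.mem_range.2 (((P.p 0) a).isLt)
        · intro m _; exact Finset.mem_univ _
        · intro a _
          simp only [Fin.eta, Equiv.symm_apply_apply]
        · intro m hm
          simp only [Equiv.apply_symm_apply]
        · intro a _
          rw [Finset.sum_congr rfl (fun b _ => point a b)]
          refine Finset.sum_bij' (fun b _ => ((P.p 0) b).val)
            (fun m hm => (P.p 0).symm ⟨m, Finset.mem_range.1 hm⟩) ?_ ?_ ?_ ?_ ?_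
          · intro b _; exact Finset.mem_range.2 (((P.p 0) b).isLt)
          · intro m _; exact Finset.mem_univ _
          · intro b _
            simp only [Fin.eta, Equiv.symm_apply_apply]
          · intro m hm
            simp only [Equiv.apply_symm_apply]
          · intro b _
            rfl
      have step2 : (∑ m ∈ Finset.range n, ∑ m' ∈ Finset.range n,
              (if (m < m' ∧ pi m' < pi m ∧ m ∈ S ∧ m' ∈ S) then (1:ZMod 2) else 0))
          = ∑ i ∈ S, ∑ j ∈ S, (if i < j ∧ pi j < pi i then (1:ZMod 2) else 0) := by
        rw [← Finset.sum_subset hSsub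
          (fun x _ hxS => Finset.sum_eq_zero fun j _ => if_neg (by tauto))]
        refine Finset.sum_congr rfl fun m hm => ?_
        rw [← Finset.sum_subset hSsub (fun x _ hxS => if_neg (by tauto))]
        refine Finset.sum_congr rfl fun m' hm' => ?_
        exact if_congr (by tauto) rfl rfl
      have hcast : ((arfNP pi S : ℕ) : ZMod 2)
          = ∑ i ∈ S, ∑ j ∈ S, (if i < j ∧ pi j < pi i then (1:ZMod 2) else 0) := by
        unfold arfNP
        push_cast
        rfl
      have hQF : QF P v = (((S.card + arfNP pi S : ℕ)) : ZMod 2) := by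
        unfold QF
        rw [partA, step1, step2, ← hcast, hScard, Nat.cast_add]
      rw [hQF, ZMod.val_natCast]
      exact arfAux_pow_mod _
  -- counting: the character sum equals 2^n - 2 * Arf
  have hcount : (∑ v : A → ZMod 2, (-1:ℤ)^((QF P v).val))
      = (2:ℤ)^n - 2 * (Arf P : ℤ) := by
    rw [← Finset.sum_filter_add_sum_filter_not Finset.univ (fun v => QF P v = 1)]
    have e1 : (∑ v ∈ Finset.univ.filter (fun v : A → ZMod 2 => QF P v = 1),
        (-1:ℤ)^((QF P v).val)) = -(Arf P : ℤ) := by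
      have hval : ∀ v : A → ZMod 2, QF P v = 1 → ((-1:ℤ)^((QF P v).val)) = -1 := by
        intro v hv
        rw [hv, show ((1:ZMod 2)).val = 1 from rfl, pow_one]
      rw [Finset.sum_congr rfl (fun v hv => hval v (Finset.mem_filter.1 hv).2),
        Finset.sum_const, Arf]
      simp
    have e2 : (∑ v ∈ Finset.univ.filter (fun v : A → ZMod 2 => ¬ QF P v = 1),
        (-1:ℤ)^((QF P v).val)) = ((Finset.univ.filter (fun v : A → ZMod 2 => ¬ QF P v = 1)).card : ℤ) := by
      have hval : ∀ v : A → ZMod 2, ¬ QF P v = 1 → ((-1:ℤ)^((QF P v).val)) = 1 := by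
        intro v hv
        rcases arfAux_zmod2 (QF P v) with h0 | h0
        · rw [h0, show ((0:ZMod 2)).val = 0 from rfl, pow_zero]
        · exact absurd h0 hv
      rw [Finset.sum_congr rfl (fun v hv => hval v (Finset.mem_filter.1 hv).2),
        Finset.sum_const]
      simp
    rw [e1, e2]
    have hc : (Finset.univ.filter (fun v : A → ZMod 2 => QF P v = 1)).card
        + (Finset.univ.filter (fun v : A → ZMod 2 => ¬ QF P v = 1)).card
        = 2 ^ n := by
      rw [Finset.card_filter_add_card_filter_not, Finset.card_univ]
      rw [Fintype.card_fun]
      simp [hn_def]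
    have : (Arf P : ℤ) + ((Finset.univ.filter (fun v : A → ZMod 2 => ¬ QF P v = 1)).card : ℤ)
        = 2 ^ n := by
      rw [Arf]
      exact_mod_cast congrArg (fun x : ℕ => (x : ℤ)) hc
    push_cast at this ⊢
    linarith
  -- n in terms of the block counts
  have htel : ∀ t ≤ ℓ, k 0 + ∑ r ∈ Finset.range t, (k (r+1) - k r) = k t := by
    intro t
    induction t with
    | zero => simp
    | succ t ih =>
      intro ht
      rw [Finset.sum_range_succ]
      have h1 := ih (by omega)
      have h2 := hmono t (by omega)
      omega
  have hsum := arfAux_sum_partition ℓ (fun i => k (i+1) - k i) N1 N2 N4 N5 hsizes hN1 hN2 hN4 hN5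
  have hneq : n = N1 + 2 * N2 + 4 * N4 + 5 * N5 + 2 := by
    have := htel ℓ (le_refl _)
    rw [hk0, hkl, hsum] at this
    omega
  -- combine
  have hcore := C.core N1 N2 N4 N5 hsizes hN1 hN2 hN4 hN5
  rw [hW, hcore] at hcount
  have h2n : (2:ℤ)^n = 2 * 2^(N1 + 2*N2 + 4*N4 + 5*N5 + 1) := by
    rw [hneq, show N1 + 2*N2 + 4*N4 + 5*N5 + 2 = (N1 + 2*N2 + 4*N4 + 5*N5 + 1) + 1 by ring,
      pow_succ]
    ring
  rw [h2n] at hcount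
  linarith
end

section
/- Let Σ ⊂ Std(A) be the set of standard pairs of the form: top row a, w_0, w_1, w_2, ..., w_d, w_{d+1}, z and bottom row z, w_0, w_d, w_{d-1}, ..., w_1, w_{d+1}, a, where w_0 and w_{d+1} are possibly empty words and w_1,...,w_d are non-empty words (so the block of words w_1⋯w_d appears in reversed word-order in the bottom row while w_0 and w_{d+1} appear identically). Then Σ is closed under all inner and outer switch moves. -/
variable {A : Type*} [Fintype A]

/-- The row `ε` of a pair, as the list of its letters in order. -/
def rowList {A : Type*} [Fintype A] (P : RPair A) (ε : Fin 2) : List A :=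
  List.ofFn (fun i : Fin (Fintype.card A) => (P.p ε).symm i)

/-- An inner `{b,c}`-switch: transforms a standard pair of shape
`[a w1 b w2 c w3 z / z w4 b w5 c w6 a]` into `[a w2 c w1 b w3 z / z w5 c w4 b w6 a]`. -/
def InnerSwitch {A : Type*} [Fintype A] (P Q : RPair A) : Prop :=
  ∃ (a z b c : A) (w1 w2 w3 w4 w5 w6 : List A),
    rowList P 0 = a :: (w1 ++ [b] ++ w2 ++ [c] ++ w3 ++ [z]) ∧
    rowList P 1 = z :: (w4 ++ [b] ++ w5 ++ [c] ++ w6 ++ [a]) ∧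
    rowList Q 0 = a :: (w2 ++ [c] ++ w1 ++ [b] ++ w3 ++ [z]) ∧
    rowList Q 1 = z :: (w5 ++ [c] ++ w4 ++ [b] ++ w6 ++ [a])

/-- An outer switch: transforms a standard pair `[a w1 b w2 z / z w3 b w4 a]`
into either `[b w2 a w1 z / z w4 a w3 b]` (`{a,b}`-switch)
or `[a w2 z w1 b / b w4 z w3 a]` (`{b,z}`-switch). -/
def OuterSwitch {A : Type*} [Fintype A] (P Q : RPair A) : Prop :=
  ∃ (a z b : A) (w1 w2 w3 w4 : List A),
    rowList P 0 = a :: (w1 ++ [b] ++ w2 ++ [z]) ∧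
    rowList P 1 = z :: (w3 ++ [b] ++ w4 ++ [a]) ∧
    ((rowList Q 0 = b :: (w2 ++ [a] ++ w1 ++ [z]) ∧
      rowList Q 1 = z :: (w4 ++ [a] ++ w3 ++ [b])) ∨
     (rowList Q 0 = a :: (w2 ++ [z] ++ w1 ++ [b]) ∧
      rowList Q 1 = b :: (w4 ++ [z] ++ w3 ++ [a])))

/-- Membership in `Σ`: the standard pairs of shape
`[a w0 w1 w2 ⋯ wd w_{d+1} z / z w0 wd w_{d-1} ⋯ w1 w_{d+1} a]` with `w0`,
`w_{d+1}` possibly empty and `w1,…,wd` non-empty. -/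
def InSigma {A : Type*} [Fintype A] (P : RPair A) : Prop :=
  ∃ (a z : A) (w0 wlast : List A) (d : ℕ) (w : ℕ → List A),
    1 ≤ d ∧
    (∀ i : ℕ, 1 ≤ i → i ≤ d → w i ≠ []) ∧
    rowList P 0 = a :: (w0 ++ ((List.range d).map (fun i => w (i + 1))).flatten
      ++ wlast ++ [z]) ∧
    rowList P 1 = z :: (w0 ++ ((List.range d).map (fun i => w (d - i))).flatten
      ++ wlast ++ [a])


section ListLemmas
open List
variable {α : Type*} {β : Type*}


lemma nodup_split_eq {b : α} :
    ∀ {u v u' v' : List α}, (u ++ b :: v).Nodup → u ++ b :: v = u' ++ b :: v' →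
    u = u' ∧ v = v' := by
  intro u
  induction u with
  | nil =>
    intro v u' v' hnd he
    cases u' with
    | nil => simpa using he
    | cons x u'' =>
      simp only [nil_append, cons_append, List.cons.injEq] at he
      obtain ⟨rfl, hv⟩ := he
      have hb : b ∉ v := (nodup_cons.mp hnd).1
      exact absurd (hv ▸ (by simp : b ∈ u'' ++ b :: v')) hb
  | cons x u ih =>
    intro v u' v' hnd he
    cases u' with
    | nil =>
      simp only [cons_append, nil_append, List.cons.injEq] at he
      obtain ⟨h0, hv⟩ := he
      subst h0
      have hb : x ∉ u ++ x :: v := (nodup_cons.mp hnd).1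
      exact absurd (by simp : x ∈ u ++ x :: v) hb
    | cons y u'' =>
      simp only [cons_append, List.cons.injEq] at he
      obtain ⟨rfl, hv⟩ := he
      obtain ⟨h1, h2⟩ := ih (nodup_cons.mp hnd).2 hv
      exact ⟨by rw [h1], h2⟩

/-- The core of the Σ-shape: `S` is `w0 ++ blocks ++ wl`, `S'` is `w0 ++ reversed
blocks ++ wl`, blocks nonempty. -/
def Blocked (S S' : List α) : Prop :=
  ∃ (w0 wl : List α) (W : List (List α)),
    W ≠ [] ∧ (∀ v ∈ W, v ≠ []) ∧
    S = w0 ++ W.flatten ++ wl ∧ S' = w0 ++ W.reverse.flatten ++ wl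

lemma locate {S S' u v u' v' w0 wl : List α} {W : List (List α)} {b : α}
    (hS : S = w0 ++ W.flatten ++ wl) (hS' : S' = w0 ++ W.reverse.flatten ++ wl)
    (hnd : S.Nodup) (hnd' : S'.Nodup)
    (hu : S = u ++ b :: v) (hu' : S' = u' ++ b :: v') :
    (∃ p m, w0 = p ++ b :: m ∧ u = p ∧ v = m ++ W.flatten ++ wl ∧
      u' = p ∧ v' = m ++ W.reverse.flatten ++ wl) ∨
    (∃ U p q V, W = U ++ (p ++ b :: q) :: V ∧
      u = w0 ++ U.flatten ++ p ∧ v = q ++ V.flatten ++ wl ∧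
      u' = w0 ++ V.reverse.flatten ++ p ∧ v' = q ++ U.reverse.flatten ++ wl) ∨
    (∃ p m, wl = p ++ b :: m ∧ u = w0 ++ W.flatten ++ p ∧ v = m ∧
      u' = w0 ++ W.reverse.flatten ++ p ∧ v' = m) := by
  have hbS : b ∈ w0 ∨ b ∈ W.flatten ∨ b ∈ wl := by
    have : b ∈ S := hu ▸ (by simp)
    rw [hS] at this; simpa using this
  rcases hbS with hb | hb | hb
  · obtain ⟨p, m, rfl⟩ := append_of_mem hb
    have e1 : S = p ++ b :: (m ++ W.flatten ++ wl) := by rw [hS]; simp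
    have e2 : S' = p ++ b :: (m ++ W.reverse.flatten ++ wl) := by rw [hS']; simp
    obtain ⟨h1, h2⟩ := nodup_split_eq (e1 ▸ hnd) (e1.symm.trans hu)
    obtain ⟨h3, h4⟩ := nodup_split_eq (e2 ▸ hnd') (e2.symm.trans hu')
    exact Or.inl ⟨p, m, rfl, h1.symm, h2.symm, h3.symm, h4.symm⟩
  · obtain ⟨l, hlW, hbl⟩ := mem_flatten.mp hb
    obtain ⟨U, V, rfl⟩ := append_of_mem hlW
    obtain ⟨p, q, rfl⟩ := append_of_mem hbl
    have e1 : S = (w0 ++ U.flatten ++ p) ++ b :: (q ++ V.flatten ++ wl) := by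
      rw [hS]; simp
    have e2 : S' = (w0 ++ V.reverse.flatten ++ p) ++ b :: (q ++ U.reverse.flatten ++ wl) := by
      rw [hS']; simp
    obtain ⟨h1, h2⟩ := nodup_split_eq (e1 ▸ hnd) (e1.symm.trans hu)
    obtain ⟨h3, h4⟩ := nodup_split_eq (e2 ▸ hnd') (e2.symm.trans hu')
    exact Or.inr (Or.inl ⟨U, p, q, V, rfl, h1.symm, h2.symm, h3.symm, h4.symm⟩)
  · obtain ⟨p, m, rfl⟩ := append_of_mem hb
    have e1 : S = (w0 ++ W.flatten ++ p) ++ b :: m := by rw [hS]; simp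
    have e2 : S' = (w0 ++ W.reverse.flatten ++ p) ++ b :: m := by rw [hS']; simp
    obtain ⟨h1, h2⟩ := nodup_split_eq (e1 ▸ hnd) (e1.symm.trans hu)
    obtain ⟨h3, h4⟩ := nodup_split_eq (e2 ▸ hnd') (e2.symm.trans hu')
    exact Or.inr (Or.inr ⟨p, m, rfl, h1.symm, h2.symm, h3.symm, h4.symm⟩)

lemma blocked_outer {S S' u v u' v' : List α} {b x : α}
    (hB : Blocked S S') (hnd : S.Nodup) (hnd' : S'.Nodup)
    (hu : S = u ++ b :: v) (hu' : S' = u' ++ b :: v') :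
    Blocked (v ++ x :: u) (v' ++ x :: u') := by
  obtain ⟨w0, wl, W, hWne, hWblocks, hS, hS'⟩ := hB
  rcases locate hS hS' hnd hnd' hu hu' with
    ⟨p, m, hw0, h1, h2, h3, h4⟩ |
    ⟨U, p, q, V, hW, h1, h2, h3, h4⟩ |
    ⟨p, m, hwl, h1, h2, h3, h4⟩ <;> rw [h1, h2, h3, h4]
  · exact ⟨m, wl ++ x :: p, W, hWne, hWblocks, by simp, by simp⟩
  · refine ⟨q, p, V ++ (wl ++ x :: w0) :: U, by simp, ?_, by simp, by simp⟩
    intro l hl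
    rcases mem_append.mp hl with h | h
    · exact hWblocks l (hW ▸ by simp [h])
    · rcases mem_cons.mp h with rfl | h
      · simp
      · exact hWblocks l (hW ▸ by simp [h])
  · exact ⟨m ++ x :: w0, p, W, hWne, hWblocks, by simp, by simp⟩

lemma blocks_cons_ne {U V : List (List α)} {l1 : List α}
    (hU : ∀ v ∈ U, v ≠ []) (hV : ∀ v ∈ V, v ≠ []) (h1 : l1 ≠ []) :
    ∀ v ∈ U ++ l1 :: V, v ≠ [] := by
  intro l hl
  rcases mem_append.mp hl with h | h
  · exact hU l h
  · rcases mem_cons.mp h with rfl | h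
    · exact h1
    · exact hV l h

lemma blocked_inner {S S' w1 w2 w3 w4 w5 w6 : List α} {b c : α}
    (hB : Blocked S S') (hnd : S.Nodup) (hnd' : S'.Nodup)
    (h0 : S = w1 ++ b :: (w2 ++ c :: w3)) (h1 : S' = w4 ++ b :: (w5 ++ c :: w6)) :
    Blocked (w2 ++ c :: (w1 ++ b :: w3)) (w5 ++ c :: (w4 ++ b :: w6)) := by
  classical
  obtain ⟨w0, wl, W, hWne, hWblocks, hS, hS'⟩ := hB
  have ndv : (w2 ++ c :: w3).Nodup :=
    List.Nodup.sublist (h0 ▸ ((sublist_cons_self b _).trans (sublist_append_right w1 _))) hnd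
  have ndv' : (w5 ++ c :: w6).Nodup :=
    List.Nodup.sublist (h1 ▸ ((sublist_cons_self b _).trans (sublist_append_right w4 _))) hnd'
  rcases locate hS hS' hnd hnd' h0 h1 with
    ⟨p, m, hw0, k1, k2, k3, k4⟩ |
    ⟨U, p, q, V, hW, k1, k2, k3, k4⟩ |
    ⟨p, m, hwl, k1, k2, k3, k4⟩
  · -- b inside w0
    rcases locate k2 k4 ndv ndv' rfl rfl with
      ⟨p2, m2, hm, g1, g2, g3, g4⟩ |
      ⟨U, p2, q2, V, hW2, g1, g2, g3, g4⟩ |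
      ⟨p2, m2, hwl2, g1, g2, g3, g4⟩ <;> rw [k1, k3, g1, g2, g3, g4]
    · exact ⟨p2 ++ c :: (p ++ b :: m2), wl, W, hWne, hWblocks, by simp, by simp⟩
    · have hU : ∀ v ∈ U, v ≠ [] := fun l hl => hWblocks l (hW2 ▸ by simp [hl])
      have hV : ∀ v ∈ V, v ≠ [] := fun l hl => hWblocks l (hW2 ▸ by simp [hl])
      exact ⟨m, wl, U ++ (p2 ++ c :: (p ++ b :: q2)) :: V, by simp,
        blocks_cons_ne hU hV (by simp), by simp, by simp⟩
    · exact ⟨m, p2 ++ c :: (p ++ b :: m2), W, hWne, hWblocks, by simp, by simp⟩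
  · -- b inside a block of W
    have hU : ∀ v ∈ U, v ≠ [] := fun l hl => hWblocks l (hW ▸ by simp [hl])
    have hV : ∀ v ∈ V, v ≠ [] := fun l hl => hWblocks l (hW ▸ by simp [hl])
    have hcq : c ∈ q ∨ c ∈ wl := by
      have m1 : c ∈ q ∨ c ∈ V.flatten ∨ c ∈ wl := by
        have hm : c ∈ w2 ++ c :: w3 := by simp
        rw [k2] at hm; simpa using hm
      rcases m1 with h | h | h
      · exact Or.inl h
      · exfalso
        have m2 : c ∈ q ∨ c ∈ U.flatten ∨ c ∈ wl := by
          have hm : c ∈ w5 ++ c :: w6 := by simp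
          rw [k4] at hm
          simpa [List.mem_flatten] using hm
        have hcnt := List.nodup_iff_count_le_one.mp hnd c
        rw [hS, hW] at hcnt
        simp only [List.count_append, List.flatten_append, List.flatten_cons,
          List.count_cons] at hcnt
        have hVpos : 0 < count c V.flatten := List.count_pos_iff.mpr h
        rcases m2 with h2 | h2 | h2 <;>
          [skip; skip; skip] <;>
          · have := List.count_pos_iff.mpr h2
            omega
      · exact Or.inr h
    rcases hcq with hc | hc
    · obtain ⟨m, q2, rfl⟩ := append_of_mem hc
      obtain ⟨g1, g2⟩ := nodup_split_eq ndv (k2.trans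
        (show m ++ c :: q2 ++ V.flatten ++ wl = m ++ c :: (q2 ++ V.flatten ++ wl) by simp))
      obtain ⟨g3, g4⟩ := nodup_split_eq ndv' (k4.trans
        (show m ++ c :: q2 ++ U.reverse.flatten ++ wl
          = m ++ c :: (q2 ++ U.reverse.flatten ++ wl) by simp))
      rw [k1, k3, g1, g2, g3, g4]
      exact ⟨m ++ c :: w0, wl, U ++ (p ++ b :: q2) :: V, by simp,
        blocks_cons_ne hU hV (by simp), by simp, by simp⟩
    · obtain ⟨r, s, rfl⟩ := append_of_mem hc
      obtain ⟨g1, g2⟩ := nodup_split_eq ndv (k2.trans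
        (show q ++ V.flatten ++ (r ++ c :: s)
          = (q ++ V.flatten ++ r) ++ c :: s by simp))
      obtain ⟨g3, g4⟩ := nodup_split_eq ndv' (k4.trans
        (show q ++ U.reverse.flatten ++ (r ++ c :: s)
          = (q ++ U.reverse.flatten ++ r) ++ c :: s by simp))
      rw [k1, k3, g1, g2, g3, g4]
      exact ⟨q, p ++ b :: s, V ++ (r ++ c :: w0) :: U, by simp,
        blocks_cons_ne hV hU (by simp), by simp, by simp⟩
  · -- b inside wl
    obtain ⟨g1, g2⟩ := nodup_split_eq ndv (k2.trans k4.symm)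
    rw [k1, k3, ← g1, ← g2]
    exact ⟨w2 ++ c :: w0, p ++ b :: w3, W, hWne, hWblocks, by simp, by simp⟩

lemma map_getD_range (W : List β) (dflt : β) :
    (List.range W.length).map (fun i => W.getD i dflt) = W := by
  apply List.ext_getElem
  · simp
  · intro i h1 h2
    simp only [List.getElem_map, List.getElem_range]
    exact W.getD_eq_getElem dflt (by simpa using h1)

lemma map_getD_range_rev (W : List β) (dflt : β) :
    (List.range W.length).map (fun i => W.getD (W.length - i - 1) dflt) = W.reverse := by
  apply List.ext_getElem
  · simp
  · intro i h1 h2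
    simp only [List.getElem_map, List.getElem_range, List.getElem_reverse]
    have hi : i < W.length := by simpa using h1
    rw [W.getD_eq_getElem dflt (by omega)]
    congr 1
    omega

lemma map_range_rev (d : ℕ) (w : ℕ → List α) :
    (List.range d).map (fun i => w (d - i)) = ((List.range d).map (fun i => w (i+1))).reverse := by
  apply List.ext_getElem
  · simp
  · intro i h1 h2
    have hi : i < d := by simpa using h1
    simp only [List.getElem_map, List.getElem_range, List.getElem_reverse,
      List.length_map, List.length_range]
    congr 1
    omega

end ListLemmas

section Glue
open List

lemma rowList_nodup {A : Type*} [Fintype A] (P : RPair A) (ε : Fin 2) :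
    (rowList P ε).Nodup := by
  rw [rowList]
  exact List.nodup_ofFn.mpr (Equiv.injective _)

lemma pack_sigma {A : Type*} [Fintype A] {Q : RPair A} {a z : A} {S S' : List A}
    (h0 : rowList Q 0 = a :: (S ++ [z])) (h1 : rowList Q 1 = z :: (S' ++ [a]))
    (hB : Blocked S S') : InSigma Q := by
  obtain ⟨w0, wl, W, hWne, hWb, hSe, hS'e⟩ := hB
  refine ⟨a, z, w0, wl, W.length, fun i => W.getD (i-1) [],
    List.length_pos_iff.mpr hWne, ?_, ?_, ?_⟩
  · intro i hi1 hi2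
    have hlt : i - 1 < W.length := by omega
    show W.getD (i - 1) [] ≠ []
    rw [List.getD_eq_getElem _ _ hlt]
    exact hWb _ (List.getElem_mem hlt)
  · rw [h0, hSe]
    simp only [Nat.add_sub_cancel]
    rw [map_getD_range]
  · rw [h1, hS'e]
    simp only []
    rw [map_getD_range_rev]

end Glue

/-- The set `Σ` is closed under inner and outer switch moves. -/
theorem sigma_closed_under_switches
    {A : Type*} [Fintype A] (P Q : RPair A) (hP : InSigma P)
    (h : InnerSwitch P Q ∨ OuterSwitch P Q) :
    InSigma Q := by
  classical
  obtain ⟨a, z, w0, wlast, d, w, hd, hw, hr0, hr1⟩ := hP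
  set W : List (List A) := (List.range d).map (fun i => w (i+1)) with hWdef
  have hrow0 : rowList P 0 = a :: ((w0 ++ W.flatten ++ wlast) ++ [z]) := by
    rw [hr0]
  have hrow1 : rowList P 1 = z :: ((w0 ++ W.reverse.flatten ++ wlast) ++ [a]) := by
    rw [hr1, map_range_rev d w, ← hWdef]
  have hB : Blocked (w0 ++ W.flatten ++ wlast) (w0 ++ W.reverse.flatten ++ wlast) := by
    refine ⟨w0, wlast, W, ?_, ?_, rfl, rfl⟩
    · rw [hWdef]
      simp only [ne_eq, List.map_eq_nil_iff, List.range_eq_nil]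
      omega
    · intro v hv
      rw [hWdef] at hv
      simp only [List.mem_map, List.mem_range] at hv
      obtain ⟨i, hid, rfl⟩ := hv
      exact hw (i+1) (by omega) (by omega)
  have nd0 := rowList_nodup P 0
  have nd1 := rowList_nodup P 1
  have ndS : (w0 ++ W.flatten ++ wlast).Nodup := by
    rw [hrow0] at nd0
    exact List.Nodup.sublist (List.sublist_append_left _ _) (List.nodup_cons.mp nd0).2
  have ndS' : (w0 ++ W.reverse.flatten ++ wlast).Nodup := by
    rw [hrow1] at nd1
    exact List.Nodup.sublist (List.sublist_append_left _ _) (List.nodup_cons.mp nd1).2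
  rcases h with ⟨a', z', b, c, u1, u2, u3, u4, u5, u6, p0, p1, q0, q1⟩ |
    ⟨a', z', b, u1, u2, u3, u4, p0, p1, hQ⟩
  · -- inner switch
    have e0 := hrow0.symm.trans p0
    rw [List.cons_eq_cons] at e0
    obtain ⟨ha, ht0⟩ := e0
    have e0' : (w0 ++ W.flatten ++ wlast) ++ [z] = (u1 ++ b :: (u2 ++ c :: u3)) ++ [z'] :=
      ht0.trans (by simp)
    obtain ⟨hScore, hz1⟩ := List.append_inj' e0' rfl
    have hz : z = z' := by simpa using hz1
    subst ha; subst hz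
    have e1 := hrow1.symm.trans p1
    rw [List.cons_eq_cons] at e1
    obtain ⟨-, ht1⟩ := e1
    have e1' : (w0 ++ W.reverse.flatten ++ wlast) ++ [a] = (u4 ++ b :: (u5 ++ c :: u6)) ++ [a] :=
      ht1.trans (by simp)
    obtain ⟨hS'core, -⟩ := List.append_inj' e1' rfl
    have hBQ := blocked_inner hB ndS ndS' hScore hS'core
    have q0' : rowList Q 0 = a :: ((u2 ++ c :: (u1 ++ b :: u3)) ++ [z]) := by
      rw [q0]; simp
    have q1' : rowList Q 1 = z :: ((u5 ++ c :: (u4 ++ b :: u6)) ++ [a]) := by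
      rw [q1]; simp
    exact pack_sigma q0' q1' hBQ
  · -- outer switch
    have e0 := hrow0.symm.trans p0
    rw [List.cons_eq_cons] at e0
    obtain ⟨ha, ht0⟩ := e0
    have e0' : (w0 ++ W.flatten ++ wlast) ++ [z] = (u1 ++ b :: u2) ++ [z'] :=
      ht0.trans (by simp)
    obtain ⟨hScore, hz1⟩ := List.append_inj' e0' rfl
    have hz : z = z' := by simpa using hz1
    subst ha; subst hz
    have e1 := hrow1.symm.trans p1
    rw [List.cons_eq_cons] at e1
    obtain ⟨-, ht1⟩ := e1
    have e1' : (w0 ++ W.reverse.flatten ++ wlast) ++ [a] = (u3 ++ b :: u4) ++ [a] :=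
      ht1.trans (by simp)
    obtain ⟨hS'core, -⟩ := List.append_inj' e1' rfl
    rcases hQ with ⟨q0, q1⟩ | ⟨q0, q1⟩
    · have hBQ := blocked_outer (x := a) hB ndS ndS' hScore hS'core
      have q0' : rowList Q 0 = b :: ((u2 ++ a :: u1) ++ [z]) := by rw [q0]; simp
      have q1' : rowList Q 1 = z :: ((u4 ++ a :: u3) ++ [b]) := by rw [q1]; simp
      exact pack_sigma q0' q1' hBQ
    · have hBQ := blocked_outer (x := z) hB ndS ndS' hScore hS'core
      have q0' : rowList Q 0 = a :: ((u2 ++ z :: u1) ++ [b]) := by rw [q0]; simp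
      have q1' : rowList Q 1 = b :: ((u4 ++ z :: u3) ++ [a]) := by rw [q1]; simp
      exact pack_sigma q0' q1' hBQ
end

section
/- Every Rauzy class on an alphabet of at least 4 letters contains either a good pair or a degenerate* pair. -/
variable {A : Type*} [Fintype A]

/-- `P'` is the (prefix) restriction of `P` to the sub-alphabet `S`:
`p'_ε(b) = #{c ∈ S : p_ε(c) ≤ p_ε(b)}` (1-indexed values). -/
def IsRestrictionOf {A : Type*} [Fintype A] [DecidableEq A]
    (P : RPair A) (S : Finset A) (P' : RPair ↥S) : Prop :=
  ∀ (ε : Fin 2) (b : ↥S),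
    ((P'.p ε) b).val + 1 =
      (Finset.univ.filter (fun c : ↥S => (P.p ε) (c : A) ≤ (P.p ε) (b : A))).card

/-- A standard pair is degenerate* if some letter occupies position `#A - 1`
in both rows. -/
def DegenerateStar {A : Type*} [Fintype A] (P : RPair A) : Prop :=
  StandardPair P ∧ ∃ c : A,
    ((P.p 0) c).val = Fintype.card A - 2 ∧ ((P.p 1) c).val = Fintype.card A - 2

/-- The interior letters of a pair: those not in the first or last position of
either row. -/
def interiorLetters {A : Type*} [Fintype A] [DecidableEq A] (P : RPair A) : Finset A :=
  Finset.univ.filter (fun b : A =>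
    ((P.p 0) b).val ≠ 0 ∧ ((P.p 1) b).val ≠ 0 ∧
    ((P.p 0) b).val ≠ Fintype.card A - 1 ∧ ((P.p 1) b).val ≠ Fintype.card A - 1)

/-- A standard pair is good if its restriction to the interior letters
(positions `2,…,#A-1`) is irreducible. -/
def GoodPair {A : Type*} [Fintype A] [DecidableEq A] (P : RPair A) : Prop :=
  StandardPair P ∧
  ∀ P' : RPair ↥(interiorLetters P),
    IsRestrictionOf P (interiorLetters P) P' → IrreduciblePair P'


/-! ### Auxiliary machinery -/

namespace GD

open Relation Finset

lemma fin2_cases (ε : Fin 2) : ε = 0 ∨ ε = 1 := by revert ε; decide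

lemma fin2_sub_ne (ε : Fin 2) : 1 - ε ≠ ε := by revert ε; decide

lemma fin2_sub_sub (ε : Fin 2) : 1 - (1 - ε) = ε := by revert ε; decide

/-- value function of the insertion permutation -/
def insF (N μ v : ℕ) : ℕ := if v ≤ μ then v else if v < N - 1 then v + 1 else μ + 1

def insG (N μ v : ℕ) : ℕ := if v ≤ μ then v else if v = μ + 1 then N - 1 else v - 1

/-- The insertion permutation: cycles the last entry to position `μ+1`. -/
def insPerm (N : ℕ) (μ : ℕ) : Fin N ≃ Fin N where
  toFun x := ⟨insF N μ x.val, by have := x.isLt; unfold insF; split_ifs <;> omega⟩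
  invFun x := ⟨insG N μ x.val, by have := x.isLt; unfold insG; split_ifs <;> omega⟩
  left_inv x := by
    apply Fin.ext
    have := x.isLt
    simp only [insF, insG]
    split_ifs <;> omega
  right_inv x := by
    apply Fin.ext
    have := x.isLt
    simp only [insF, insG]
    split_ifs <;> omega

@[simp] lemma insPerm_val (N μ : ℕ) (x : Fin N) :
    (insPerm N μ x).val = insF N μ x.val := rfl

variable {A : Type*} [Fintype A]

/-- The step relation of the Rauzy diagram. -/
def Stp (X Y : RPair A) : Prop := ∃ ε, Rmove ε X Y

lemma rpair_ext {P Q : RPair A} (h : P.p = Q.p) : P = Q := by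
  cases P; cases Q; simpa using h

/-- The letter at the last position of row ε. -/
noncomputable def lastLetter (P : RPair A) (ε : Fin 2) (h : 0 < Fintype.card A) : A :=
  (P.p ε).symm ⟨Fintype.card A - 1, by omega⟩

lemma lastLetter_val (P : RPair A) (ε : Fin 2) (h : 0 < Fintype.card A) :
    ((P.p ε) (lastLetter P ε h)).val = Fintype.card A - 1 := by
  simp [lastLetter]

lemma eq_lastLetter (P : RPair A) (ε : Fin 2) (h : 0 < Fintype.card A) {z : A}
    (hz : ((P.p ε) z).val = Fintype.card A - 1) : z = lastLetter P ε h := by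
  have : (P.p ε) z = ⟨Fintype.card A - 1, by omega⟩ := Fin.ext hz
  rw [lastLetter, ← this, Equiv.symm_apply_apply]

/-- The Rauzy move as a function. -/
noncomputable def mv (ε : Fin 2) (P : RPair A) : RPair A :=
  if h : 0 < Fintype.card A then
    ⟨fun δ => if δ = ε then P.p ε else
      (P.p (1 - ε)).trans
        (insPerm _ (((P.p (1 - ε)) (lastLetter P ε h)).val))⟩
  else P

variable {P Q : RPair A} {ε : Fin 2}

lemma mv_p_self (h : 0 < Fintype.card A) : (mv ε P).p ε = P.p ε := by
  simp [mv, h]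

lemma mv_p_other (h : 0 < Fintype.card A) :
    (mv ε P).p (1 - ε) =
      (P.p (1 - ε)).trans (insPerm _ (((P.p (1 - ε)) (lastLetter P ε h)).val)) := by
  simp [mv, h, fin2_sub_ne ε]

lemma mv_val (h : 0 < Fintype.card A) (b : A) :
    (((mv ε P).p (1 - ε)) b).val =
      insF (Fintype.card A) (((P.p (1 - ε)) (lastLetter P ε h)).val)
        (((P.p (1 - ε)) b).val) := by
  rw [mv_p_other h]; rfl

lemma mv_spec (h : 0 < Fintype.card A) : Rmove ε P (mv ε P) := by
  refine ⟨mv_p_self h, ?_⟩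
  intro z hz b
  rw [eq_lastLetter P ε h hz] at *
  rw [mv_val h b]
  simp only [insF]

lemma fin2_other {δ ε : Fin 2} (h : δ ≠ ε) : δ = 1 - ε := by revert δ ε; decide

lemma rmove_eq_mv (h : 0 < Fintype.card A) (hm : Rmove ε P Q) : Q = mv ε P := by
  obtain ⟨h1, h2⟩ := hm
  apply rpair_ext
  funext δ
  by_cases hδ : δ = ε
  · subst hδ; rw [h1, mv_p_self h]
  · rw [fin2_other hδ, mv_p_other h]
    apply Equiv.ext; intro b
    apply Fin.ext
    have e := h2 (lastLetter P ε h) (lastLetter_val P ε h) b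
    rw [e]
    simp only [Equiv.trans_apply, insPerm_val, insF]

instance : Finite (RPair A) := by
  apply Finite.of_injective (fun P : RPair A => fun ε => ((P.p ε : A → Fin (Fintype.card A))))
  intro P Q hpq
  apply rpair_ext
  funext δ
  apply Equiv.ext
  intro b
  exact congrFun (congrFun hpq δ) b

lemma mv_injective (h : 0 < Fintype.card A) : Function.Injective (mv ε : RPair A → RPair A) := by
  intro P Q hpq
  have hps : P.p ε = Q.p ε := by
    have e1 := @mv_p_self _ _ P ε h
    have e2 := @mv_p_self _ _ Q ε h
    rw [← e1, ← e2, hpq]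
  have hz : lastLetter P ε h = lastLetter Q ε h := by
    simp [lastLetter, hps]
  set μP := ((P.p (1 - ε)) (lastLetter P ε h)).val with hμP
  set μQ := ((Q.p (1 - ε)) (lastLetter Q ε h)).val with hμQ
  have hμ : μP = μQ := by
    have e1 : (((mv ε P).p (1 - ε)) (lastLetter P ε h)).val = μP := by
      rw [mv_val h]; simp [insF]; rfl
    have e2 : (((mv ε Q).p (1 - ε)) (lastLetter Q ε h)).val = μQ := by
      rw [mv_val h]; simp [insF]; rfl
    rw [← e1, ← e2, hpq, hz]
  have hrow : P.p (1 - ε) = Q.p (1 - ε) := by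
    apply Equiv.ext
    intro b
    have e1 := @mv_val _ _ P ε h b
    have e2 := @mv_val _ _ Q ε h b
    rw [hpq] at e1
    rw [e2, ← hμP, ← hμQ, ← hμ] at e1
    -- e1 : insF N μP (Q b) = insF N μP (P b)
    apply Fin.ext
    have hb1 := ((P.p (1-ε)) b).isLt
    have hb2 := ((Q.p (1-ε)) b).isLt
    have hμlt : μP < Fintype.card A := Fin.is_lt _
    simp only [insF] at e1
    split_ifs at e1 <;> omega
  apply rpair_ext
  funext δ
  rcases fin2_cases δ with hδ | hδ <;> rcases fin2_cases ε with hε | hε <;>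
      subst hδ <;> subst hε
  · exact hps
  · exact hrow
  · exact hrow
  · exact hps

lemma reach_mv_iter (h : 0 < Fintype.card A) (ε : Fin 2) (j : ℕ) (P : RPair A) :
    InRauzyClass P ((mv ε)^[j] P) := by
  induction j with
  | zero => exact ReflTransGen.refl
  | succ n ih =>
      rw [Function.iterate_succ_apply']
      exact ReflTransGen.tail ih ⟨ε, mv_spec h⟩

lemma stp_back (h : 0 < Fintype.card A) (hs : Stp P Q) : InRauzyClass Q P := by
  obtain ⟨ε, hm⟩ := hs
  have hQ : Q = mv ε P := rmove_eq_mv h hm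
  subst hQ
  let e : Equiv.Perm (RPair A) :=
    Equiv.ofBijective (mv ε) ((Finite.injective_iff_bijective).mp (mv_injective h))
  have hfin : IsOfFinOrder e := isOfFinOrder_of_finite e
  obtain ⟨m, hm0, hme⟩ := isOfFinOrder_iff_pow_eq_one.mp hfin
  have hiter : ∀ j (X : RPair A), (e ^ j) X = (mv ε)^[j] X := by
    intro j X
    rw [Equiv.Perm.coe_pow]
    induction j with
    | zero => rfl
    | succ n ih => rfl
  obtain ⟨m', rfl⟩ : ∃ m', m = m' + 1 := ⟨m - 1, by omega⟩
  have key : (mv ε)^[m' + 1] P = P := by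
    rw [← hiter (m' + 1) P, hme]; rfl
  have hm' : (mv ε)^[m'] (mv ε P) = P := by
    rw [← Function.iterate_succ_apply]; exact key
  conv_rhs => rw [← hm']
  exact reach_mv_iter h ε m' (mv ε P)

lemma reach_symm (h : 0 < Fintype.card A) (hr : InRauzyClass P Q) : InRauzyClass Q P := by
  induction hr with
  | refl => exact ReflTransGen.refl
  | tail _ hstep ih => exact ReflTransGen.trans (stp_back h hstep) ih


/-! ### Swap symmetry, rotations, monotonicity -/

def sw (P : RPair A) : RPair A := ⟨fun δ => P.p (1 - δ)⟩

@[simp] lemma sw_p (P : RPair A) (δ : Fin 2) : (sw P).p δ = P.p (1 - δ) := rfl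

lemma sw_sw (P : RPair A) : sw (sw P) = P := by
  apply rpair_ext; funext δ
  show P.p (1 - (1 - δ)) = P.p δ
  rw [fin2_sub_sub]

lemma rmove_sw (hm : Rmove ε P Q) : Rmove (1 - ε) (sw P) (sw Q) := by
  obtain ⟨h1, h2⟩ := hm
  constructor
  · show Q.p (1 - (1 - ε)) = P.p (1 - (1 - ε))
    rw [fin2_sub_sub]; exact h1
  · intro z hz b
    simp only [sw_p, fin2_sub_sub] at hz ⊢
    exact h2 z hz b

lemma stp_sw (hs : Stp P Q) : Stp (sw P) (sw Q) := by
  obtain ⟨ε, hm⟩ := hs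
  exact ⟨1 - ε, rmove_sw hm⟩

lemma reach_sw (hr : InRauzyClass P Q) : InRauzyClass (sw P) (sw Q) := by
  induction hr with
  | refl => exact Relation.ReflTransGen.refl
  | tail _ hstep ih => exact Relation.ReflTransGen.tail ih (stp_sw hstep)

/-- Value function of the `t`-fold rotation of the positions `(μ, N-1]`. -/
def rotv (N μ t x : ℕ) : ℕ :=
  if x ≤ μ then x else if x + t ≤ N - 1 then x + t else x + t - (N - 1 - μ)

lemma insF_rotv {N μ t x : ℕ} (hx : x < N) (hμ : μ < N) (ht : t + 1 ≤ N - 1 - μ) :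
    insF N μ (rotv N μ t x) = rotv N μ (t + 1) x := by
  unfold insF rotv; split_ifs <;> omega

/-- Rotating the top row (row 0) by iterated moves of type 1. -/
lemma rot_top (h : 0 < Fintype.card A) (R : RPair A) (μ t : ℕ)
    (hμ : ((R.p 0) (lastLetter R 1 h)).val = μ) (ht : t ≤ Fintype.card A - 1 - μ) :
    ∃ Q, InRauzyClass R Q ∧ Q.p 1 = R.p 1 ∧
      ∀ b, ((Q.p 0) b).val = rotv (Fintype.card A) μ t ((R.p 0) b).val := by
  induction t with
  | zero =>
      refine ⟨R, Relation.ReflTransGen.refl, rfl, fun b => ?_⟩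
      have := ((R.p 0) b).isLt
      unfold rotv; split_ifs <;> omega
  | succ n ih =>
      obtain ⟨Q, hreach, hp1, hval⟩ := ih (by omega)
      have hμlt : μ < Fintype.card A := by
        rw [← hμ]; exact Fin.is_lt _
      refine ⟨mv 1 Q, Relation.ReflTransGen.tail hreach ⟨1, mv_spec h⟩, ?_, ?_⟩
      · have : (mv 1 Q).p 1 = Q.p 1 := mv_p_self h
        rw [this, hp1]
      · intro b
        have hlast : lastLetter Q 1 h = lastLetter R 1 h := by
          simp [lastLetter, hp1]
        have hμQ : ((Q.p 0) (lastLetter Q 1 h)).val = μ := by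
          rw [hlast, hval (lastLetter R 1 h), hμ]
          unfold rotv; split_ifs <;> omega
        have e : (((mv 1 Q).p 0) b).val
            = insF (Fintype.card A) μ (((Q.p 0) b).val) := by
          have := @mv_val _ _ Q 1 h b
          simp only [show (1 : Fin 2) - 1 = 0 from rfl] at this
          rw [this, hμQ]
        rw [e, hval b, insF_rotv (Fin.is_lt _) hμlt (by omega)]

/-- Rotating the bottom row (row 1) by iterated moves of type 0. -/
lemma rot_bot (h : 0 < Fintype.card A) (R : RPair A) (μ t : ℕ)
    (hμ : ((R.p 1) (lastLetter R 0 h)).val = μ) (ht : t ≤ Fintype.card A - 1 - μ) :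
    ∃ Q, InRauzyClass R Q ∧ Q.p 0 = R.p 0 ∧
      ∀ b, ((Q.p 1) b).val = rotv (Fintype.card A) μ t ((R.p 1) b).val := by
  have hμ' : (((sw R).p 0) (lastLetter (sw R) 1 h)).val = μ := hμ
  obtain ⟨Q, hreach, hp1, hval⟩ := rot_top h (sw R) μ t hμ' ht
  refine ⟨sw Q, ?_, hp1, hval⟩
  have := reach_sw hreach
  rwa [sw_sw] at this

lemma mono_path (g : RPair A → ℕ) (P : RPair A)
    (h : ∀ X, InRauzyClass P X → ∀ Y, Stp X Y → g X ≤ g Y) :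
    ∀ X Y, InRauzyClass P X → InRauzyClass X Y → g X ≤ g Y := by
  intro X Y hPX hXY
  induction hXY with
  | refl => exact le_refl _
  | tail hXZ hstep ih => exact le_trans ih (h _ (Relation.ReflTransGen.trans hPX hXZ) _ hstep)

lemma const_on (h : 0 < Fintype.card A) (g : RPair A → ℕ) (P : RPair A)
    (hmono : ∀ X, InRauzyClass P X → ∀ Y, Stp X Y → g X ≤ g Y)
    {Q : RPair A} (hQ : InRauzyClass P Q) : g Q = g P :=
  le_antisymm (mono_path g P hmono Q P hQ (reach_symm h hQ))
    (mono_path g P hmono P Q Relation.ReflTransGen.refl hQ)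



/-! ### Step 2: every class contains a standard pair -/

section Std

open scoped Classical

lemma mv_val' (h0 : 0 < Fintype.card A) (δ : Fin 2) (X : RPair A) (b : A) :
    (((mv (1 - δ) X).p δ) b).val =
      insF (Fintype.card A) (((X.p δ) (lastLetter X (1 - δ) h0)).val) (((X.p δ) b).val) := by
  have := @mv_val _ _ X (1 - δ) h0 b
  rwa [fin2_sub_sub] at this

lemma stp_split {X Y : RPair A} (h0 : 0 < Fintype.card A) (hs : Stp X Y) (δ : Fin 2) :
    Y = mv δ X ∨ Y = mv (1 - δ) X := by
  obtain ⟨ε, hm⟩ := hs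
  by_cases hε : ε = δ
  · left; rw [← hε]; exact rmove_eq_mv h0 hm
  · right; rw [← fin2_other hε]; exact rmove_eq_mv h0 hm

lemma pos_inj (Q : RPair A) (δ : Fin 2) {b c : A}
    (h : ((Q.p δ) b).val = ((Q.p δ) c).val) : b = c :=
  (Q.p δ).injective (Fin.ext h)

/-- the letter occupying position 0 of row δ -/
noncomputable def firstL (P : RPair A) (δ : Fin 2) (h0 : 0 < Fintype.card A) : A :=
  (P.p δ).symm ⟨0, h0⟩

lemma firstL_val (P : RPair A) (δ : Fin 2) (h0 : 0 < Fintype.card A) :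
    ((P.p δ) (firstL P δ h0)).val = 0 := by simp [firstL]

/-- position 0 of each row is frozen along moves. -/
lemma frozen_zero (h0 : 0 < Fintype.card A) {P Q : RPair A} (hr : InRauzyClass P Q)
    (δ : Fin 2) (b : A) (hb : ((P.p δ) b).val = 0) : ((Q.p δ) b).val = 0 := by
  induction hr with
  | refl => exact hb
  | tail _ hstep ih =>
      rcases stp_split h0 hstep δ with rfl | rfl
      · rw [mv_p_self h0]; exact ih
      · rw [mv_val' h0]
        rw [ih]
        simp [insF]

/-- letters never last in row δ -/
noncomputable def NN (P : RPair A) (δ : Fin 2) : Finset A :=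
  Finset.univ.filter
    (fun c => ∀ Q, InRauzyClass P Q → ((Q.p δ) c).val ≠ Fintype.card A - 1)

lemma mem_NN {P : RPair A} {δ : Fin 2} {c : A} :
    c ∈ NN P δ ↔ ∀ Q, InRauzyClass P Q → ((Q.p δ) c).val ≠ Fintype.card A - 1 := by
  simp [NN]

lemma firstL_mem_NN (hA : 4 ≤ Fintype.card A) (P : RPair A) (δ : Fin 2) :
    firstL P δ (by omega) ∈ NN P δ := by
  rw [mem_NN]
  intro Q hQ
  rw [frozen_zero (by omega) hQ δ _ (firstL_val P δ (by omega))]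
  omega

/-- positions of never-last letters are frozen -/
lemma NN_frozen (h0 : 0 < Fintype.card A) {P : RPair A} {δ : Fin 2} {c : A}
    (hc : c ∈ NN P δ) {Q : RPair A} (hQ : InRauzyClass P Q) :
    ((Q.p δ) c).val = ((P.p δ) c).val := by
  rw [mem_NN] at hc
  apply const_on h0 (fun X => ((X.p δ) c).val) P _ hQ
  intro X hX Y hs
  rcases stp_split h0 hs δ with rfl | rfl
  · rw [mv_p_self h0]
  · rw [mv_val' h0]
    have hlt := ((X.p δ) c).isLt
    have hne := hc X hX
    simp only [insF]
    split_ifs <;> omega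

/-- a never-last letter always sits at or before the pivot -/
lemma NN_le_pivot (h0 : 0 < Fintype.card A) {P : RPair A} {δ : Fin 2} {c : A}
    (hc : c ∈ NN P δ) {Q : RPair A} (hQ : InRauzyClass P Q) :
    ((Q.p δ) c).val ≤ ((Q.p δ) (lastLetter Q (1 - δ) h0)).val := by
  by_contra hgt
  push_neg at hgt
  have h1 : InRauzyClass P (mv (1 - δ) Q) :=
    Relation.ReflTransGen.tail hQ ⟨1 - δ, mv_spec h0⟩
  have e1 := NN_frozen h0 hc hQ
  have e2 := NN_frozen h0 hc h1
  rw [mv_val' h0] at e2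
  have hne : ((Q.p δ) c).val ≠ Fintype.card A - 1 := (mem_NN.mp hc) Q hQ
  have hlt := ((Q.p δ) c).isLt
  simp only [insF] at e2
  split_ifs at e2 <;> omega

/-- rotate row δ of Q (other row fixed) to bring letter c to the last position -/
lemma rot_make_last (h0 : 0 < Fintype.card A) (Q : RPair A) (δ : Fin 2) (c : A)
    (hc : ((Q.p δ) (lastLetter Q (1 - δ) h0)).val < ((Q.p δ) c).val) :
    ∃ Q', InRauzyClass Q Q' ∧ Q'.p (1 - δ) = Q.p (1 - δ) ∧
      ((Q'.p δ) c).val = Fintype.card A - 1 ∧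
      ∀ b, ((Q.p δ) b).val ≤ ((Q.p δ) (lastLetter Q (1 - δ) h0)).val →
        ((Q'.p δ) b).val = ((Q.p δ) b).val := by
  set μ := ((Q.p δ) (lastLetter Q (1 - δ) h0)).val with hμdef
  have hclt := ((Q.p δ) c).isLt
  set t := Fintype.card A - 1 - ((Q.p δ) c).val with htdef
  have ht : t ≤ Fintype.card A - 1 - μ := by omega
  have key : ∃ Q', InRauzyClass Q Q' ∧ Q'.p (1 - δ) = Q.p (1 - δ) ∧
      ∀ b, ((Q'.p δ) b).val = rotv (Fintype.card A) μ t ((Q.p δ) b).val := by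
    rcases fin2_cases δ with rfl | rfl
    · obtain ⟨Q', h1, h2, h3⟩ := rot_top h0 Q μ t rfl ht
      exact ⟨Q', h1, h2, h3⟩
    · obtain ⟨Q', h1, h2, h3⟩ := rot_bot h0 Q μ t rfl ht
      exact ⟨Q', h1, h2, h3⟩
  obtain ⟨Q', h1, h2, h3⟩ := key
  refine ⟨Q', h1, h2, ?_, ?_⟩
  · rw [h3 c]
    unfold rotv
    split_ifs <;> omega
  · intro b hb
    rw [h3 b]
    unfold rotv
    split_ifs <;> omega

/-- the max position in row δ among never-last letters, with packaging -/
lemma frozen_pack (hA : 4 ≤ Fintype.card A) (P : RPair A) (δ : Fin 2) :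
    ∃ M : ℕ, M ≤ Fintype.card A - 2 ∧
      NN P δ = Finset.univ.filter (fun c => ((P.p δ) c).val ≤ M) ∧
      (∀ Q, InRauzyClass P Q → ∀ c, ((P.p δ) c).val ≤ M →
        ((Q.p δ) c).val = ((P.p δ) c).val) := by
  have h0 : 0 < Fintype.card A := by omega
  have hne : (NN P δ).Nonempty := ⟨_, firstL_mem_NN hA P δ⟩
  obtain ⟨s, hsmem, hsmax⟩ := Finset.exists_max_image (NN P δ) (fun c => ((P.p δ) c).val) hne
  set M := ((P.p δ) s).val with hMdef
  have hMle : M ≤ Fintype.card A - 2 := by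
    have := (mem_NN.mp hsmem) P Relation.ReflTransGen.refl
    have := ((P.p δ) s).isLt
    omega
  -- frozen prefix
  have hfroz : ∀ Q, InRauzyClass P Q → ∀ c, ((P.p δ) c).val ≤ M →
      ((Q.p δ) c).val = ((P.p δ) c).val := by
    intro Q hQ
    induction hQ with
    | refl => intro c _; rfl
    | @tail X Y hPX hstep ih =>
        intro c hc
        have hpivot : M ≤ ((X.p δ) (lastLetter X (1 - δ) h0)).val := by
          have := NN_le_pivot h0 hsmem hPX
          have := NN_frozen h0 hsmem hPX
          omega
        rcases stp_split h0 hstep δ with rfl | rfl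
        · rw [mv_p_self h0]; exact ih c hc
        · rw [mv_val' h0, ih c hc]
          simp only [insF]
          split_ifs <;> omega
  refine ⟨M, hMle, ?_, hfroz⟩
  ext c
  simp only [mem_NN, Finset.mem_filter, Finset.mem_univ, true_and]
  constructor
  · intro hc
    have : c ∈ NN P δ := mem_NN.mpr hc
    exact hsmax c this
  · intro hc Q hQ
    rw [hfroz Q hQ c hc]
    omega

/-- helper: cardinality of position-interval preimages -/
lemma card_pos_le {n : ℕ} (e : A ≃ Fin n) (m : ℕ) (hm : m < n) :
    (Finset.univ.filter fun c : A => (e c).val ≤ m).card = m + 1 := by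
  have h1 : (Finset.univ.filter fun c : A => (e c).val ≤ m)
      = (Finset.univ.filter fun x : Fin n => x.val ≤ m).image e.symm := by
    ext c
    simp only [Finset.mem_filter, Finset.mem_univ, true_and, Finset.mem_image]
    constructor
    · intro hc; exact ⟨e c, hc, e.symm_apply_apply c⟩
    · rintro ⟨x, hx, rfl⟩; rwa [e.apply_symm_apply]
  rw [h1, Finset.card_image_of_injective _ e.symm.injective]
  have h2 : (Finset.univ.filter fun x : Fin n => x.val ≤ m) = Finset.Iic ⟨m, hm⟩ := by
    ext x
    simp [Fin.le_def]
  rw [h2, Fin.card_Iic]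

lemma card_pos_lt {n : ℕ} (e : A ≃ Fin n) (m : ℕ) (hm : m ≤ n) :
    (Finset.univ.filter fun c : A => (e c).val < m).card = m := by
  rcases Nat.eq_zero_or_pos m with rfl | hpos
  · simp
  · have : (Finset.univ.filter fun c : A => (e c).val < m)
        = (Finset.univ.filter fun c : A => (e c).val ≤ m - 1) := by
      ext c; simp only [Finset.mem_filter, Finset.mem_univ, true_and]; omega
    rw [this, card_pos_le e (m-1) (by omega)]
    omega

end Std


section Std2

open scoped Classical

theorem exists_standard (hA : 4 ≤ Fintype.card A) (P : RPair A) (hP : IrreduciblePair P) :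
    ∃ Q, InRauzyClass P Q ∧ StandardPair Q := by
  have h0 : 0 < Fintype.card A := by omega
  set n := Fintype.card A with hn
  set a0 := firstL P 0 h0 with ha0
  set z0 := firstL P 1 h0 with hz0
  have ha0v : ((P.p 0) a0).val = 0 := firstL_val P 0 h0
  have hz0v : ((P.p 1) z0).val = 0 := firstL_val P 1 h0
  have haz : a0 ≠ z0 := by
    intro heq
    apply hP 1 (by omega) (by omega)
    ext b
    simp only [Set.mem_setOf_eq]
    constructor
    · intro hb
      have : ((P.p 0) b).val = 0 := by omega
      have hb0 : b = a0 := pos_inj P 0 (by rw [this, ha0v])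
      rw [hb0, heq, hz0v]; omega
    · intro hb
      have : ((P.p 1) b).val = 0 := by omega
      have hb0 : b = z0 := pos_inj P 1 (by rw [this, hz0v])
      rw [hb0, ← heq, ha0v]; omega
  -- case 1 : a0 is last in row 1 somewhere
  by_cases hbl : ∃ Q, InRauzyClass P Q ∧ ((Q.p 1) a0).val = n - 1
  · obtain ⟨Q, hQ, hQa⟩ := hbl
    have hz0Q : ((Q.p 1) z0).val = 0 := frozen_zero h0 hQ 1 z0 hz0v
    have ha0Q : ((Q.p 0) a0).val = 0 := frozen_zero h0 hQ 0 a0 ha0v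
    have hlast : lastLetter Q 1 h0 = a0 := (eq_lastLetter Q 1 h0 hQa).symm
    have hz0pos : 0 < ((Q.p 0) z0).val := by
      rcases Nat.eq_zero_or_pos (((Q.p 0) z0).val) with hz | hz
      · exact absurd (pos_inj Q 0 (by rw [hz, ha0Q])).symm haz
      · exact hz
    obtain ⟨Q', hQ', hfix, hz0last, hpre⟩ := rot_make_last h0 Q 0 z0 (by
      show ((Q.p 0) (lastLetter Q (1 - 0) h0)).val < ((Q.p 0) z0).val
      have : (1 : Fin 2) - 0 = 1 := rfl
      rw [this, hlast, ha0Q]; exact hz0pos)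
    have hfix1 : Q'.p 1 = Q.p 1 := hfix
    refine ⟨Q', Relation.ReflTransGen.trans hQ hQ', ?_, ?_⟩
    · intro b hb
      have hb0 : b = a0 := by
        apply pos_inj Q' 0
        rw [hb]
        have := hpre a0 (by
          have e10 : (1 : Fin 2) - 0 = 1 := rfl
          rw [e10, hlast] <;> omega)
        omega
      rw [hb0, hfix1]; exact hQa
    · intro b hb
      have hb0 : b = z0 := by
        apply pos_inj Q' 1
        rw [hb, hfix1, hz0Q]
      rw [hb0]; exact hz0last
  -- case 2 : a0 never last in row 1 : contradiction with irreducibility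
  · exfalso
    push_neg at hbl
    have ha0N1 : a0 ∈ NN P 1 := mem_NN.mpr (fun Q hQ => by
      have := hbl Q hQ; omega)
    have ha0N0 : a0 ∈ NN P 0 := by
      rw [mem_NN]
      intro Q hQ
      rw [frozen_zero h0 hQ 0 a0 ha0v]
      omega
    have hz0N1 : z0 ∈ NN P 1 := by
      rw [mem_NN]
      intro Q hQ
      rw [frozen_zero h0 hQ 1 z0 hz0v]
      omega
    have hz0N0 : z0 ∈ NN P 0 := by
      rw [mem_NN]
      intro Q hQ hzlast
      -- z0 last in row 0 at Q; rotate row 1 to make a0 last in row 1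
      have hz0Q1 : ((Q.p 1) z0).val = 0 := frozen_zero h0 hQ 1 z0 hz0v
      have hlastQ : lastLetter Q 0 h0 = z0 := (eq_lastLetter Q 0 h0 hzlast).symm
      have ha0pos : 0 < ((Q.p 1) a0).val := by
        rcases Nat.eq_zero_or_pos (((Q.p 1) a0).val) with hz | hz
        · exact absurd (pos_inj Q 1 (by rw [hz, hz0Q1])) haz
        · exact hz
      obtain ⟨Q', hQ', _, ha0last, _⟩ := rot_make_last h0 Q 1 a0 (by
        show ((Q.p 1) (lastLetter Q (1 - 1) h0)).val < ((Q.p 1) a0).val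
        have : (1 : Fin 2) - 1 = 0 := rfl
        rw [this, hlastQ, hz0Q1]; exact ha0pos)
      exact hbl Q' (Relation.ReflTransGen.trans hQ hQ') ha0last
    obtain ⟨M0, hM0le, hN0eq, hfroz0⟩ := frozen_pack hA P 0
    obtain ⟨M1, hM1le, hN1eq, hfroz1⟩ := frozen_pack hA P 1
    have hM0pos : 1 ≤ M0 := by
      have := hN0eq ▸ hz0N0
      simp only [Finset.mem_filter, Finset.mem_univ, true_and] at this
      have hz0ne0 : ((P.p 0) z0).val ≠ 0 := fun h => haz (pos_inj P 0 (by rw [ha0v, h])).symm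
      omega
    have hM1pos : 1 ≤ M1 := by
      have := hN1eq ▸ ha0N1
      simp only [Finset.mem_filter, Finset.mem_univ, true_and] at this
      have ha0ne0 : ((P.p 1) a0).val ≠ 0 := fun h => haz (pos_inj P 1 (by rw [hz0v, h]))
      omega
    -- inclusions
    have hW1 : ∀ c, ((P.p 0) c).val < M0 → c ∈ NN P 1 := by
      intro c hc
      rw [mem_NN]
      intro Q hQ hclast
      have hcfroz : ((Q.p 0) c).val = ((P.p 0) c).val := hfroz0 Q hQ c (by omega)
      have hlastQ : lastLetter Q 1 h0 = c := (eq_lastLetter Q 1 h0 hclast).symm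
      -- pivot bound : M0 ≤ pos of lastLetter Q 1 in row 0
      have hs0 : ∃ s ∈ NN P 0, ((P.p 0) s).val = M0 := by
        have : (Finset.univ.filter fun c : A => ((P.p 0) c).val ≤ M0).Nonempty := by
          rw [← hN0eq]; exact ⟨a0, ha0N0⟩
        -- the letter at position M0
        refine ⟨(P.p 0).symm ⟨M0, by omega⟩, ?_, by simp⟩
        rw [hN0eq]
        simp
      obtain ⟨s, hsmem, hsval⟩ := hs0
      have h1 := NN_le_pivot h0 hsmem hQ
      have h2 := NN_frozen h0 hsmem hQ
      have e10 : (1 : Fin 2) - 0 = 1 := rfl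
      rw [e10, hlastQ] at h1
      omega
    have hW2 : ∀ c, ((P.p 1) c).val < M1 → c ∈ NN P 0 := by
      intro c hc
      rw [mem_NN]
      intro Q hQ hclast
      have hcfroz : ((Q.p 1) c).val = ((P.p 1) c).val := hfroz1 Q hQ c (by omega)
      have hlastQ : lastLetter Q 0 h0 = c := (eq_lastLetter Q 0 h0 hclast).symm
      have hs1 : ∃ s ∈ NN P 1, ((P.p 1) s).val = M1 := by
        refine ⟨(P.p 1).symm ⟨M1, by omega⟩, ?_, by simp⟩
        rw [hN1eq]
        simp
      obtain ⟨s, hsmem, hsval⟩ := hs1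
      have h1 := NN_le_pivot h0 hsmem hQ
      have h2 := NN_frozen h0 hsmem hQ
      have : (1 : Fin 2) - 1 = 0 := rfl
      rw [this, hlastQ] at h1
      omega
    -- cardinalities
    have hcard0 : (NN P 0).card = M0 + 1 := by
      rw [hN0eq]; exact card_pos_le (P.p 0) M0 (by omega)
    have hcard1 : (NN P 1).card = M1 + 1 := by
      rw [hN1eq]; exact card_pos_le (P.p 1) M1 (by omega)
    -- the inclusion Finsets
    set X0 := Finset.univ.filter (fun c : A => ((P.p 0) c).val < M0) with hX0
    set Y1 := Finset.univ.filter (fun c : A => ((P.p 1) c).val < M1) with hY1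
    have hX0card : X0.card = M0 := card_pos_lt (P.p 0) M0 (by omega)
    have hY1card : Y1.card = M1 := card_pos_lt (P.p 1) M1 (by omega)
    have hX0sub : X0 ⊆ NN P 1 := by
      intro c hc
      rw [hX0, Finset.mem_filter] at hc
      exact hW1 c hc.2
    have hY1sub : Y1 ⊆ NN P 0 := by
      intro c hc
      rw [hY1, Finset.mem_filter] at hc
      exact hW2 c hc.2
    have hle1 : M0 ≤ M1 + 1 := by
      have := Finset.card_le_card hX0sub
      omega
    have hle2 : M1 ≤ M0 + 1 := by
      have := Finset.card_le_card hY1sub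
      omega
    -- the contradiction helper
    have contra : ∀ k : ℕ, 0 < k → k < n →
        (Finset.univ.filter fun c : A => ((P.p 0) c).val < k)
          = (Finset.univ.filter fun c : A => ((P.p 1) c).val < k) → False := by
      intro k hk1 hk2 heq
      apply hP k hk1 hk2
      ext b
      simp only [Set.mem_setOf_eq]
      constructor
      · intro hb
        have : b ∈ Finset.univ.filter fun c : A => ((P.p 0) c).val < k := by
          simp [hb]
        rw [heq] at this
        simpa using this
      · intro hb
        have : b ∈ Finset.univ.filter fun c : A => ((P.p 1) c).val < k := by
          simp [hb]
        rw [← heq] at this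
        simpa using this
    rcases Nat.lt_trichotomy M0 M1 with hlt | heqM | hgt
    · -- M1 = M0 + 1 : Y1 = NN P 0
      have hM1eq : M1 = M0 + 1 := by omega
      have hY1eq : Y1 = NN P 0 :=
        Finset.eq_of_subset_of_card_le hY1sub (by omega)
      apply contra (M0+1) (by omega) (by omega)
      rw [← hM1eq]
      have : (Finset.univ.filter fun c : A => ((P.p 0) c).val < M1)
          = (Finset.univ.filter fun c : A => ((P.p 0) c).val ≤ M0) := by
        ext c; simp only [Finset.mem_filter, Finset.mem_univ, true_and]; omega
      rw [this, ← hN0eq, ← hY1eq]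
    · -- M0 = M1
      by_cases hNeq : NN P 0 = NN P 1
      · apply contra (M0+1) (by omega) (by omega)
        have e0 : (Finset.univ.filter fun c : A => ((P.p 0) c).val < M0+1)
            = (Finset.univ.filter fun c : A => ((P.p 0) c).val ≤ M0) := by
          ext c; simp only [Finset.mem_filter, Finset.mem_univ, true_and]; omega
        have e1 : (Finset.univ.filter fun c : A => ((P.p 1) c).val < M0+1)
            = (Finset.univ.filter fun c : A => ((P.p 1) c).val ≤ M1) := by
          ext c; simp only [Finset.mem_filter, Finset.mem_univ, true_and]; omega
        rw [e0, e1, ← hN0eq, ← hN1eq, hNeq]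
      · -- both differences nonempty
        have hv : ∃ v, v ∈ NN P 0 ∧ v ∉ NN P 1 := by
          by_contra hno
          push_neg at hno
          exact hNeq (Finset.eq_of_subset_of_card_le hno (by omega))
        have hu : ∃ u, u ∈ NN P 1 ∧ u ∉ NN P 0 := by
          by_contra hno
          push_neg at hno
          exact hNeq (Finset.eq_of_subset_of_card_le hno (by omega)).symm
        obtain ⟨v, hvN0, hvN1⟩ := hv
        obtain ⟨u, huN1, huN0⟩ := hu
        -- v is last in row 1 somewhere; conclude pos0 v = M0
        have hvM : ((P.p 0) v).val = M0 := by
          rw [mem_NN] at hvN1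
          push_neg at hvN1
          obtain ⟨Q, hQ, hvlast⟩ := hvN1
          have hlastQ : lastLetter Q 1 h0 = v := (eq_lastLetter Q 1 h0 hvlast).symm
          by_contra hne
          have hvle : ((P.p 0) v).val ≤ M0 := by
            have := hN0eq ▸ hvN0
            simpa using this
          -- some letter of NN P 0 sits after v in row 0 : rotate it to be last
          have hs0 : ((P.p 0) ((P.p 0).symm ⟨M0, by omega⟩)).val = M0 := by simp
          set s := (P.p 0).symm ⟨M0, by omega⟩ with hs
          have hsmem : s ∈ NN P 0 := by
            rw [hN0eq]
            simp only [Finset.mem_filter, Finset.mem_univ, true_and]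
            omega
          have hsQ : ((Q.p 0) s).val = M0 := by
            rw [NN_frozen h0 hsmem hQ, hs0]
          have hvQ : ((Q.p 0) v).val = ((P.p 0) v).val := NN_frozen h0 hvN0 hQ
          obtain ⟨Q', hQ', _, hslast, _⟩ := rot_make_last h0 Q 0 s (by
            show ((Q.p 0) (lastLetter Q (1 - 0) h0)).val < ((Q.p 0) s).val
            have : (1 : Fin 2) - 0 = 1 := rfl
            rw [this, hlastQ, hsQ, hvQ]
            omega)
          exact (mem_NN.mp hsmem) Q' (Relation.ReflTransGen.trans hQ hQ') hslast
        have huM : ((P.p 1) u).val = M1 := by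
          rw [mem_NN] at huN0
          push_neg at huN0
          obtain ⟨Q, hQ, hulast⟩ := huN0
          have hlastQ : lastLetter Q 0 h0 = u := (eq_lastLetter Q 0 h0 hulast).symm
          by_contra hne
          have hule : ((P.p 1) u).val ≤ M1 := by
            have := hN1eq ▸ huN1
            simpa using this
          have hs1 : ((P.p 1) ((P.p 1).symm ⟨M1, by omega⟩)).val = M1 := by simp
          set s := (P.p 1).symm ⟨M1, by omega⟩ with hs
          have hsmem : s ∈ NN P 1 := by
            rw [hN1eq]
            simp only [Finset.mem_filter, Finset.mem_univ, true_and]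
            omega
          have hsQ : ((Q.p 1) s).val = M1 := by
            rw [NN_frozen h0 hsmem hQ, hs1]
          have huQ : ((Q.p 1) u).val = ((P.p 1) u).val := NN_frozen h0 huN1 hQ
          obtain ⟨Q', hQ', _, hslast, _⟩ := rot_make_last h0 Q 1 s (by
            show ((Q.p 1) (lastLetter Q (1 - 1) h0)).val < ((Q.p 1) s).val
            have : (1 : Fin 2) - 1 = 0 := rfl
            rw [this, hlastQ, hsQ, huQ]
            omega)
          exact (mem_NN.mp hsmem) Q' (Relation.ReflTransGen.trans hQ hQ') hslast
        -- final set equality at k = M0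
        apply contra M0 (by omega) (by omega)
        ext c
        simp only [Finset.mem_filter, Finset.mem_univ, true_and]
        constructor
        · intro hc
          have hcN1 : c ∈ NN P 1 := hW1 c hc
          have hcle : ((P.p 1) c).val ≤ M1 := by
            have := hN1eq ▸ hcN1
            simpa using this
          have hcne : ((P.p 1) c).val ≠ M1 := by
            intro heq'
            have hcu : c = u := pos_inj P 1 (by rw [heq', huM])
            subst hcu
            have : c ∈ NN P 0 := by
              rw [hN0eq]
              simp only [Finset.mem_filter, Finset.mem_univ, true_and]
              omega
            exact huN0 this
          omega
        · intro hc
          have hcN0 : c ∈ NN P 0 := hW2 c (by omega)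
          have hcle : ((P.p 0) c).val ≤ M0 := by
            have := hN0eq ▸ hcN0
            simpa using this
          have hcne : ((P.p 0) c).val ≠ M0 := by
            intro heq'
            have hcv : c = v := pos_inj P 0 (by rw [heq', hvM])
            subst hcv
            have : c ∈ NN P 1 := by
              rw [hN1eq]
              simp only [Finset.mem_filter, Finset.mem_univ, true_and]
              omega
            exact hvN1 this
          omega
    · -- M0 = M1 + 1 : X0 = NN P 1
      have hM0eq : M0 = M1 + 1 := by omega
      have hX0eq : X0 = NN P 1 :=
        Finset.eq_of_subset_of_card_le hX0sub (by omega)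
      apply contra M0 (by omega) (by omega)
      have : (Finset.univ.filter fun c : A => ((P.p 1) c).val < M0)
          = (Finset.univ.filter fun c : A => ((P.p 1) c).val ≤ M1) := by
        ext c; simp only [Finset.mem_filter, Finset.mem_univ, true_and]; omega
      rw [this, ← hN1eq, ← hX0eq]

end Std2


/-! ### Step 3: levels, good pairs, degenerate pairs -/

section Lv

open scoped Classical

variable [DecidableEq A]

/-- the two rows occupy positions 1..j with the same letters -/
def Lev (q : RPair A) (j : ℕ) : Prop :=
  Finset.univ.filter (fun c : A => 1 ≤ ((q.p 0) c).val ∧ ((q.p 0) c).val ≤ j)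
    = Finset.univ.filter (fun c : A => 1 ≤ ((q.p 1) c).val ∧ ((q.p 1) c).val ≤ j)

lemma card_pos_range {n : ℕ} (e : A ≃ Fin n) (lo hi : ℕ) (hhi : hi < n) (hlo : 1 ≤ lo)
    (hlohi : lo ≤ hi + 1) :
    (Finset.univ.filter fun c : A => lo ≤ (e c).val ∧ (e c).val ≤ hi).card = hi + 1 - lo := by
  have h1 : (Finset.univ.filter fun c : A => lo ≤ (e c).val ∧ (e c).val ≤ hi)
      = (Finset.univ.filter fun c : A => (e c).val ≤ hi)
        \ (Finset.univ.filter fun c : A => (e c).val ≤ lo - 1) := by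
    ext c
    simp only [Finset.mem_filter, Finset.mem_univ, true_and, Finset.mem_sdiff]
    omega
  have h2 : (Finset.univ.filter fun c : A => (e c).val ≤ lo - 1)
      ⊆ (Finset.univ.filter fun c : A => (e c).val ≤ hi) := by
    intro c hc
    simp only [Finset.mem_filter, Finset.mem_univ, true_and] at hc ⊢
    omega
  rw [h1, Finset.card_sdiff_of_subset h2, card_pos_le e hi hhi, card_pos_le e (lo-1) (by omega)]
  omega

/-- In a standard pair, the first letter of row 0. -/
lemma std_facts (hA : 4 ≤ Fintype.card A) {q : RPair A} (hstd : StandardPair q) :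
    ((q.p 1) (firstL q 0 (by omega))).val = Fintype.card A - 1 ∧
    ((q.p 0) (firstL q 1 (by omega))).val = Fintype.card A - 1 := by
  exact ⟨hstd.1 _ (firstL_val q 0 (by omega)), hstd.2 _ (firstL_val q 1 (by omega))⟩

/-- reducibility at level n-3 means degenerate*. -/
lemma lev_degstar (hA : 4 ≤ Fintype.card A) {q : RPair A} (hstd : StandardPair q)
    (hl : Lev q (Fintype.card A - 3)) : DegenerateStar q := by
  have h0 : (0:ℕ) < Fintype.card A := by omega
  set n := Fintype.card A with hn
  set aq := firstL q 0 h0 with haq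
  set zq := firstL q 1 h0 with hzq
  have haqv : ((q.p 0) aq).val = 0 := firstL_val q 0 h0
  have hzqv : ((q.p 1) zq).val = 0 := firstL_val q 1 h0
  have haq1 : ((q.p 1) aq).val = n - 1 := (std_facts hA hstd).1
  have hzq0 : ((q.p 0) zq).val = n - 1 := (std_facts hA hstd).2
  set c := (q.p 0).symm ⟨n-2, by omega⟩ with hc
  have hcv : ((q.p 0) c).val = n - 2 := by simp [hc]
  refine ⟨hstd, c, hcv, ?_⟩
  -- c is not in the common set of levels 1..n-3 of row 0, hence not of row 1
  have hnotin : c ∉ Finset.univ.filter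
      (fun b : A => 1 ≤ ((q.p 1) b).val ∧ ((q.p 1) b).val ≤ n - 3) := by
    rw [← hl]
    simp only [Finset.mem_filter, Finset.mem_univ, true_and, not_and, not_le]
    intro _
    omega
  simp only [Finset.mem_filter, Finset.mem_univ, true_and, not_and, not_le] at hnotin
  have hc1 := ((q.p 1) c).isLt
  have hcne0 : ((q.p 1) c).val ≠ 0 := by
    intro hz
    have : c = zq := pos_inj q 1 (by rw [hz, hzqv])
    rw [this] at hcv
    omega
  have hcnel : ((q.p 1) c).val ≠ n - 1 := by
    intro hz
    have : c = aq := pos_inj q 1 (by rw [hz, haq1])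
    rw [this] at hcv
    have := haqv
    omega
  have := hnotin (by omega)
  omega

/-- No levels at all makes a standard pair good. -/
lemma no_lev_good (hA : 4 ≤ Fintype.card A) {q : RPair A} (hstd : StandardPair q)
    (hnl : ∀ j, 1 ≤ j → j ≤ Fintype.card A - 3 → ¬Lev q j) : GoodPair q := by
  have h0 : (0:ℕ) < Fintype.card A := by omega
  set n := Fintype.card A with hn
  set aq := firstL q 0 h0 with haq
  set zq := firstL q 1 h0 with hzq
  have haqv : ((q.p 0) aq).val = 0 := firstL_val q 0 h0
  have hzqv : ((q.p 1) zq).val = 0 := firstL_val q 1 h0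
  have haq1 : ((q.p 1) aq).val = n - 1 := (std_facts hA hstd).1
  have hzq0 : ((q.p 0) zq).val = n - 1 := (std_facts hA hstd).2
  have hazq : aq ≠ zq := by
    intro h
    rw [h] at haqv
    have := hzq0
    omega
  -- interior letters are exactly the non-extremal ones
  have hint : ∀ b : A, b ∈ interiorLetters q ↔ (b ≠ aq ∧ b ≠ zq) := by
    intro b
    rw [interiorLetters, Finset.mem_filter]
    simp only [Finset.mem_univ, true_and]
    constructor
    · rintro ⟨h1, h2, h3, h4⟩
      constructor
      · intro hb; rw [hb] at h1; exact h1 haqv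
      · intro hb; rw [hb] at h2; exact h2 hzqv
    · rintro ⟨h1, h2⟩
      refine ⟨?_, ?_, ?_, ?_⟩
      · intro hb; exact h1 (pos_inj q 0 (by rw [hb, haqv]))
      · intro hb; exact h2 (pos_inj q 1 (by rw [hb, hzqv]))
      · intro hb; exact h2 (pos_inj q 0 (by rw [hb, hzq0]))
      · intro hb; exact h1 (pos_inj q 1 (by rw [hb, haq1]))
  have hScard : (interiorLetters q).card = n - 2 := by
    have : interiorLetters q = (Finset.univ : Finset A) \ {aq, zq} := by
      ext b
      rw [hint b]
      simp only [Finset.mem_sdiff, Finset.mem_univ, true_and, Finset.mem_insert,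
        Finset.mem_singleton]
      tauto
    rw [this, Finset.card_sdiff_of_subset (Finset.subset_univ _), Finset.card_univ]
    rw [Finset.card_insert_of_notMem (by simpa using hazq), Finset.card_singleton]
  refine ⟨hstd, ?_⟩
  intro P' hres
  -- the restriction has positions pos - 1
  have hval : ∀ (ε : Fin 2) (b : ↥(interiorLetters q)),
      ((P'.p ε) b).val + 1 = ((q.p ε) (b : A)).val := by
    intro ε b
    rw [hres ε b]
    -- count interior letters before b in row ε
    have hbS := b.2
    rw [hint (b : A)] at hbS
    -- extremal letter of row ε at position 0 / position n-1
    have key : (Finset.univ.filter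
        (fun c : ↥(interiorLetters q) => (q.p ε) (c : A) ≤ (q.p ε) (b : A))).card
        = ((q.p ε) (b : A)).val := by
      have hbij : (Finset.univ.filter
          (fun c : ↥(interiorLetters q) => (q.p ε) (c : A) ≤ (q.p ε) (b : A))).card
          = ((interiorLetters q).filter
            (fun c : A => (q.p ε) c ≤ (q.p ε) (b : A))).card := by
        refine Finset.card_bij (fun c _ => (c : A)) ?_ ?_ ?_
        · intro c hc
          simp only [Finset.mem_filter, Finset.mem_univ, true_and] at hc
          simp only [Finset.mem_filter]
          exact ⟨c.2, hc⟩
        · intro c1 _ c2 _ h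
          exact Subtype.coe_injective h
        · intro c hc
          simp only [Finset.mem_filter] at hc
          exact ⟨⟨c, hc.1⟩, by simp [hc.2], rfl⟩
      rw [hbij]
      -- the first letter of row ε
      rcases fin2_cases ε with rfl | rfl
      · -- row 0 : remove aq
        have hfe : (interiorLetters q).filter (fun c : A => (q.p 0) c ≤ (q.p 0) (b : A))
            = ((Finset.univ.filter
                (fun c : A => ((q.p 0) c).val ≤ ((q.p 0) (b:A)).val)).erase aq) := by
          ext c
          simp only [Finset.mem_filter, Finset.mem_erase, Finset.mem_univ, true_and]
          rw [hint c]
          constructor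
          · rintro ⟨⟨h1, h2⟩, h3⟩
            exact ⟨h1, by rwa [← Fin.le_def]⟩
          · rintro ⟨h1, h2⟩
            refine ⟨⟨h1, ?_⟩, by rwa [Fin.le_def]⟩
            intro hc
            rw [hc] at h2
            rw [hzq0] at h2
            have hb0 := ((q.p 0) (b:A)).isLt
            have hbne : ((q.p 0) (b:A)).val ≠ n - 1 := by
              intro hh
              exact hbS.2 (pos_inj q 0 (by rw [hh, hzq0]))
            omega
        rw [hfe, Finset.card_erase_of_mem (by
          simp only [Finset.mem_filter, Finset.mem_univ, true_and]
          rw [haqv]; omega)]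
        rw [card_pos_le (q.p 0) _ (Fin.is_lt _)]
        omega
      · -- row 1 : remove zq
        have hfe : (interiorLetters q).filter (fun c : A => (q.p 1) c ≤ (q.p 1) (b : A))
            = ((Finset.univ.filter
                (fun c : A => ((q.p 1) c).val ≤ ((q.p 1) (b:A)).val)).erase zq) := by
          ext c
          simp only [Finset.mem_filter, Finset.mem_erase, Finset.mem_univ, true_and]
          rw [hint c]
          constructor
          · rintro ⟨⟨h1, h2⟩, h3⟩
            exact ⟨h2, by rwa [← Fin.le_def]⟩
          · rintro ⟨h1, h2⟩
            refine ⟨⟨?_, h1⟩, by rwa [Fin.le_def]⟩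
            intro hc
            rw [hc] at h2
            rw [haq1] at h2
            have hb0 := ((q.p 1) (b:A)).isLt
            have hbne : ((q.p 1) (b:A)).val ≠ n - 1 := by
              intro hh
              exact hbS.1 (pos_inj q 1 (by rw [hh, haq1]))
            omega
        rw [hfe, Finset.card_erase_of_mem (by
          simp only [Finset.mem_filter, Finset.mem_univ, true_and]
          rw [hzqv]; omega)]
        rw [card_pos_le (q.p 1) _ (Fin.is_lt _)]
        omega
    omega
  -- irreducibility of the restriction
  intro k hk1 hk2 hseteq
  rw [Fintype.card_coe, hScard] at hk2
  apply hnl k (by omega) (by omega)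
  ext c
  simp only [Finset.mem_filter, Finset.mem_univ, true_and]
  -- characterize membership of interior letters
  have hmem : ∀ (c : A), (1 ≤ ((q.p 0) c).val ∧ ((q.p 0) c).val ≤ k) →
      c ∈ interiorLetters q := by
    intro c hc
    rw [hint c]
    constructor
    · intro h; rw [h, haqv] at hc; omega
    · intro h; rw [h, hzq0] at hc; omega
  have hmem1 : ∀ (c : A), (1 ≤ ((q.p 1) c).val ∧ ((q.p 1) c).val ≤ k) →
      c ∈ interiorLetters q := by
    intro c hc
    rw [hint c]
    constructor
    · intro h; rw [h, haq1] at hc; omega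
    · intro h; rw [h, hzqv] at hc; omega
  constructor
  · intro hc
    have hcS : c ∈ interiorLetters q := hmem c hc
    have h1 : (⟨c, hcS⟩ : ↥(interiorLetters q)) ∈ {a : ↥(interiorLetters q) |
        ((P'.p 0) a).val < k} := by
      simp only [Set.mem_setOf_eq]
      have := hval 0 ⟨c, hcS⟩
      simp only at this
      omega
    rw [hseteq] at h1
    simp only [Set.mem_setOf_eq] at h1
    have := hval 1 ⟨c, hcS⟩
    simp only at this
    have hge1 : ((q.p 1) c).val ≠ 0 := by
      intro hz
      have : c = zq := pos_inj q 1 (by rw [hz, hzqv])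
      rw [hint c] at hcS
      exact hcS.2 this
    omega
  · intro hc
    have hcS : c ∈ interiorLetters q := hmem1 c hc
    have h1 : (⟨c, hcS⟩ : ↥(interiorLetters q)) ∈ {a : ↥(interiorLetters q) |
        ((P'.p 1) a).val < k} := by
      simp only [Set.mem_setOf_eq]
      have := hval 1 ⟨c, hcS⟩
      simp only at this
      omega
    rw [← hseteq] at h1
    simp only [Set.mem_setOf_eq] at h1
    have := hval 0 ⟨c, hcS⟩
    simp only at this
    have hge1 : ((q.p 0) c).val ≠ 0 := by
      intro hz
      have : c = aq := pos_inj q 0 (by rw [hz, haqv])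
      rw [hint c] at hcS
      exact hcS.1 this
    omega

end Lv


section Improve

open scoped Classical

set_option maxHeartbeats 2000000 in
lemma improve (hA : 4 ≤ Fintype.card A) (q : RPair A) (hstd : StandardPair q)
    (k : ℕ) (hk1 : 1 ≤ k) (hk2 : k ≤ Fintype.card A - 4)
    (hlev : Lev q k) (hmax : ∀ j, k < j → j ≤ Fintype.card A - 3 → ¬Lev q j) :
    ∃ q', InRauzyClass q q' ∧ StandardPair q' ∧
      ∀ j, k ≤ j → j ≤ Fintype.card A - 3 → ¬Lev q' j := by
  have h0 : (0:ℕ) < Fintype.card A := by omega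
  set n := Fintype.card A with hn
  set aq := firstL q 0 h0 with haq
  set zq := firstL q 1 h0 with hzq
  have haqv : ((q.p 0) aq).val = 0 := firstL_val q 0 h0
  have hzqv : ((q.p 1) zq).val = 0 := firstL_val q 1 h0
  have haq1 : ((q.p 1) aq).val = n - 1 := (std_facts hA hstd).1
  have hzq0 : ((q.p 0) zq).val = n - 1 := (std_facts hA hstd).2
  have hlevpt : ∀ c : A, (1 ≤ ((q.p 0) c).val ∧ ((q.p 0) c).val ≤ k)
      ↔ (1 ≤ ((q.p 1) c).val ∧ ((q.p 1) c).val ≤ k) := by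
    intro c
    have := Finset.ext_iff.mp hlev c
    simpa using this
  -- the letter at position k of row 1
  set vk := (q.p 1).symm ⟨k, by omega⟩ with hvk
  have hvk1 : ((q.p 1) vk).val = k := by simp [hvk]
  set m := ((q.p 0) vk).val with hm
  have hm1 : 1 ≤ m ∧ m ≤ k := by
    have := (hlevpt vk).mpr (by rw [hvk1]; omega)
    omega
  -- the letter at position n-2 of row 0
  set u' := (q.p 0).symm ⟨n-2, by omega⟩ with hu'
  have hu0 : ((q.p 0) u').val = n - 2 := by simp [hu']
  set i := ((q.p 1) u').val with hi
  have hilt : i < n := Fin.is_lt _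
  have hi1 : k + 1 ≤ i := by
    by_contra hcon
    push_neg at hcon
    have hine : i ≠ 0 := by
      intro hz
      have : u' = zq := pos_inj q 1 (by rw [hzqv, ← hi]; exact hz)
      rw [this, hzq0] at hu0
      omega
    have := (hlevpt u').mpr (by rw [← hi]; omega)
    omega
  have hi2 : i ≤ n - 3 := by
    have hine1 : i ≠ n - 1 := by
      intro hz
      have : u' = aq := pos_inj q 1 (by rw [haq1, ← hi]; exact hz)
      rw [this, haqv] at hu0
      omega
    have hine2 : i ≠ n - 2 := by
      intro hz
      apply hmax (n-3) (by omega) (le_refl _)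
      ext c
      simp only [Finset.mem_filter, Finset.mem_univ, true_and]
      have hc0 := ((q.p 0) c).isLt
      have hc1 := ((q.p 1) c).isLt
      constructor
      · rintro ⟨ha, hb⟩
        have hne0 : ((q.p 1) c).val ≠ 0 := by
          intro hh
          have : c = zq := pos_inj q 1 (by rw [hh, hzqv])
          rw [this, hzq0] at hb ha
          omega
        have hnen1 : ((q.p 1) c).val ≠ n - 1 := by
          intro hh
          have : c = aq := pos_inj q 1 (by rw [hh, haq1])
          rw [this, haqv] at ha
          omega
        have hnen2 : ((q.p 1) c).val ≠ n - 2 := by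
          intro hh
          have : c = u' := pos_inj q 1 (by rw [hh, ← hi, hz])
          rw [this, hu0] at hb
          omega
        omega
      · rintro ⟨ha, hb⟩
        have hne0 : ((q.p 0) c).val ≠ 0 := by
          intro hh
          have : c = aq := pos_inj q 0 (by rw [hh, haqv])
          rw [this, haq1] at hb ha
          omega
        have hnen1 : ((q.p 0) c).val ≠ n - 1 := by
          intro hh
          have : c = zq := pos_inj q 0 (by rw [hh, hzq0])
          rw [this, hzqv] at ha
          omega
        have hnen2 : ((q.p 0) c).val ≠ n - 2 := by
          intro hh
          have : c = u' := pos_inj q 0 (by rw [hh, hu0])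
          rw [this, ← hi, hz] at hb
          omega
        omega
    omega
  -- Stage A : rotate row 1 fully, n-1-k times
  have hlast0 : lastLetter q 0 h0 = zq := (eq_lastLetter q 0 h0 hzq0).symm
  obtain ⟨q1, hr1, hp01, hv1⟩ := rot_bot h0 q 0 (n-1-k)
    (by rw [hlast0]; exact hzqv) (by omega)
  -- Stage B : one move of type 1
  have hvkq1 : ((q1.p 1) vk).val = n - 1 := by
    rw [hv1 vk, hvk1]
    unfold rotv
    split_ifs <;> omega
  have hlast1 : lastLetter q1 1 h0 = vk := (eq_lastLetter q1 1 h0 hvkq1).symm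
  set q2 := mv 1 q1 with hq2
  have hr2 : InRauzyClass q q2 := Relation.ReflTransGen.tail hr1 ⟨1, mv_spec h0⟩
  have hp12 : q2.p 1 = q1.p 1 := mv_p_self h0
  have hv2 : ∀ b, ((q2.p 0) b).val = insF n m (((q.p 0) b).val) := by
    intro b
    have e := mv_val' h0 0 q1 b
    have e10 : (1 : Fin 2) - 0 = 1 := rfl
    rw [e10] at e
    rw [hq2, e, hlast1]
    have e1 : ((q1.p 0) vk).val = m := by rw [hp01]
    have e2 : ((q1.p 0) b).val = ((q.p 0) b).val := by rw [hp01]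
    rw [e1, e2]
  -- Stage C : rotate row 1 after position i-k, k times
  have hu'q2 : ((q2.p 0) u').val = n - 1 := by
    rw [hv2 u', hu0]
    unfold insF
    split_ifs <;> omega
  have hlast2 : lastLetter q2 0 h0 = u' := (eq_lastLetter q2 0 h0 hu'q2).symm
  have hu'q2b : ((q2.p 1) u').val = i - k := by
    rw [show q2.p 1 = q1.p 1 from hp12, hv1 u', ← hi]
    unfold rotv
    split_ifs <;> omega
  obtain ⟨q3, hr3, hp03, hv3⟩ := rot_bot h0 q2 (i-k) k
    (by rw [hlast2]; exact hu'q2b) (by omega)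
  have hr3' : InRauzyClass q q3 := Relation.ReflTransGen.trans hr2 hr3
  -- combined row-1 values
  have hG : ∀ b, ((q3.p 1) b).val =
      (if ((q.p 1) b).val = 0 then 0
       else if ((q.p 1) b).val ≤ k then ((q.p 1) b).val + (i - k)
       else if ((q.p 1) b).val ≤ i then ((q.p 1) b).val - k
       else ((q.p 1) b).val) := by
    intro b
    rw [hv3 b, show q2.p 1 = q1.p 1 from hp12, hv1 b]
    have := ((q.p 1) b).isLt
    unfold rotv
    split_ifs <;> omega
  -- Stage D : rotate row 0 fully, n-2-m times
  have haqq3 : ((q3.p 1) aq).val = n - 1 := by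
    rw [hG aq, haq1]
    split_ifs <;> omega
  have hlast3 : lastLetter q3 1 h0 = aq := (eq_lastLetter q3 1 h0 haqq3).symm
  have haqq3t : ((q3.p 0) aq).val = 0 := by
    have e : ((q3.p 0) aq).val = ((q2.p 0) aq).val := by rw [hp03]
    rw [e, hv2 aq, haqv]
    unfold insF
    split_ifs <;> omega
  obtain ⟨q4, hr4, hp14, hv4⟩ := rot_top h0 q3 0 (n-2-m)
    (by rw [hlast3]; exact haqq3t) (by omega)
  have hr4' : InRauzyClass q q4 := Relation.ReflTransGen.trans hr3' hr4
  -- final row-0 values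
  have hF : ∀ b, ((q4.p 0) b).val =
      (if ((q.p 0) b).val = 0 then 0
       else if ((q.p 0) b).val ≤ m then ((q.p 0) b).val + (n - 2 - m)
       else if ((q.p 0) b).val ≤ n - 2 then ((q.p 0) b).val - m
       else n - 1) := by
    intro b
    have e : ((q3.p 0) b).val = ((q2.p 0) b).val := by rw [hp03]
    rw [hv4 b, e, hv2 b]
    have := ((q.p 0) b).isLt
    unfold rotv insF
    split_ifs <;> omega
  have hG4 : ∀ b, ((q4.p 1) b).val =
      (if ((q.p 1) b).val = 0 then 0
       else if ((q.p 1) b).val ≤ k then ((q.p 1) b).val + (i - k)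
       else if ((q.p 1) b).val ≤ i then ((q.p 1) b).val - k
       else ((q.p 1) b).val) := by
    intro b
    rw [show q4.p 1 = q3.p 1 from hp14]
    exact hG b
  -- q4 is standard
  have hstd4 : StandardPair q4 := by
    constructor
    · intro b hb
      rw [hF b] at hb
      have hb0 : ((q.p 0) b).val = 0 := by
        have := ((q.p 0) b).isLt
        split_ifs at hb <;> omega
      have : b = aq := pos_inj q 0 (by rw [hb0, haqv])
      rw [this, hG4 aq, haq1]
      split_ifs <;> omega
    · intro b hb
      rw [hG4 b] at hb
      have hb0 : ((q.p 1) b).val = 0 := by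
        have := ((q.p 1) b).isLt
        split_ifs at hb <;> omega
      have : b = zq := pos_inj q 1 (by rw [hb0, hzqv])
      rw [this, hF zq, hzq0]
      split_ifs <;> omega
  refine ⟨q4, hr4', hstd4, ?_⟩
  -- no levels ≥ k
  intro j hjk hjn hL
  have hLpt : ∀ c : A, (1 ≤ ((q4.p 0) c).val ∧ ((q4.p 0) c).val ≤ j)
      ↔ (1 ≤ ((q4.p 1) c).val ∧ ((q4.p 1) c).val ≤ j) := by
    intro c
    have := Finset.ext_iff.mp hL c
    simpa using this
  by_cases hij : i ≤ j
  · -- witness vk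
    have h1 := (hLpt vk).mpr (by
      rw [hG4 vk, hvk1]
      split_ifs <;> omega)
    rw [hF vk, ← hm] at h1
    split_ifs at h1 <;> omega
  · -- j < i
    push_neg at hij
    set L0 := min (m + j) (n - 2) with hL0
    set L1 := min i (k + j) with hL1
    have e0 : (Finset.univ.filter
          (fun c : A => 1 ≤ ((q4.p 0) c).val ∧ ((q4.p 0) c).val ≤ j))
        \ (Finset.univ.filter
          (fun c : A => 1 ≤ ((q.p 0) c).val ∧ ((q.p 0) c).val ≤ k))
        = Finset.univ.filter
          (fun c : A => k + 1 ≤ ((q.p 0) c).val ∧ ((q.p 0) c).val ≤ L0) := by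
      ext c
      simp only [Finset.mem_sdiff, Finset.mem_filter, Finset.mem_univ, true_and,
        not_and, not_le]
      have hy := ((q.p 0) c).isLt
      rw [hF c]
      split_ifs <;> omega
    have e1 : (Finset.univ.filter
          (fun c : A => 1 ≤ ((q4.p 1) c).val ∧ ((q4.p 1) c).val ≤ j))
        \ (Finset.univ.filter
          (fun c : A => 1 ≤ ((q.p 1) c).val ∧ ((q.p 1) c).val ≤ k))
        = Finset.univ.filter
          (fun c : A => k + 1 ≤ ((q.p 1) c).val ∧ ((q.p 1) c).val ≤ L1) := by
      ext c
      simp only [Finset.mem_sdiff, Finset.mem_filter, Finset.mem_univ, true_and,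
        not_and, not_le]
      have hy := ((q.p 1) c).isLt
      rw [hG4 c]
      split_ifs <;> omega
    have H : Finset.univ.filter
          (fun c : A => k + 1 ≤ ((q.p 0) c).val ∧ ((q.p 0) c).val ≤ L0)
        = Finset.univ.filter
          (fun c : A => k + 1 ≤ ((q.p 1) c).val ∧ ((q.p 1) c).val ≤ L1) := by
      rw [← e0, ← e1, hL, hlev]
    have hLeq : L0 = L1 := by
      have hc := congrArg Finset.card H
      rw [card_pos_range (q.p 0) (k+1) L0 (by omega) (by omega) (by omega),
        card_pos_range (q.p 1) (k+1) L1 (by omega) (by omega) (by omega)] at hc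
      omega
    apply hmax L1 (by omega) (by omega)
    ext c
    simp only [Finset.mem_filter, Finset.mem_univ, true_and]
    have Hpt : (k + 1 ≤ ((q.p 0) c).val ∧ ((q.p 0) c).val ≤ L0)
        ↔ (k + 1 ≤ ((q.p 1) c).val ∧ ((q.p 1) c).val ≤ L1) := by
      have := Finset.ext_iff.mp H c
      simpa using this
    have hlc := hlevpt c
    constructor
    · intro hc
      rcases le_or_gt (((q.p 0) c).val) k with hck | hck
      · have := hlc.mp ⟨hc.1, hck⟩
        omega
      · have := Hpt.mp ⟨by omega, by omega⟩
        omega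
    · intro hc
      rcases le_or_gt (((q.p 1) c).val) k with hck | hck
      · have := hlc.mpr ⟨hc.1, hck⟩
        omega
      · have := Hpt.mpr ⟨by omega, by omega⟩
        omega

end Improve


section Final

variable [DecidableEq A]

lemma descend (hA : 4 ≤ Fintype.card A) (P : RPair A) :
    ∀ (K : ℕ) (q : RPair A), InRauzyClass P q → StandardPair q →
      (∀ j, K < j → j ≤ Fintype.card A - 3 → ¬Lev q j) →
      ∃ Q, InRauzyClass P Q ∧ (GoodPair Q ∨ DegenerateStar Q) := by
  intro K
  induction K with
  | zero =>
      intro q hq hstd hbound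
      exact ⟨q, hq, Or.inl (no_lev_good hA hstd (fun j hj1 hj2 => hbound j (by omega) hj2))⟩
  | succ K ih =>
      intro q hq hstd hbound
      by_cases hcase : (K + 1 ≤ Fintype.card A - 3) ∧ Lev q (K + 1)
      · obtain ⟨hle, hlev⟩ := hcase
        by_cases hdeg : K + 1 = Fintype.card A - 3
        · exact ⟨q, hq, Or.inr (lev_degstar hA hstd (hdeg ▸ hlev))⟩
        · obtain ⟨q', hr', hstd', hnl'⟩ := improve hA q hstd (K + 1) (by omega) (by omega)
            hlev (fun j hj1 hj2 => hbound j hj1 hj2)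
          exact ih q' (Relation.ReflTransGen.trans hq hr') hstd'
            (fun j hj1 hj2 => hnl' j (by omega) hj2)
      · apply ih q hq hstd
        intro j hj1 hj2
        by_cases hj : j = K + 1
        · subst hj
          intro hlev
          exact hcase ⟨hj2, hlev⟩
        · exact hbound j (by omega) hj2

end Final

end GD

/-- Every Rauzy class on at least 4 letters contains a good pair or a
degenerate* pair. -/
theorem good_or_degenerate
    {A : Type*} [Fintype A] [DecidableEq A] (hA : 4 ≤ Fintype.card A)
    (P : RPair A) (hP : IrreduciblePair P) :
    ∃ Q : RPair A, InRauzyClass P Q ∧ (GoodPair Q ∨ DegenerateStar Q) := by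
  obtain ⟨q, hq, hstd⟩ := GD.exists_standard hA P hP
  exact GD.descend hA P (Fintype.card A) q hq hstd
    (fun j hj1 hj2 => absurd hj2 (by omega))
end
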